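/- arXiv:1501.00961 — 5 statements merged into one kernel-verified Lean document; each statement's English description precedes it below -/
import Mathlib

section
/- Suppose a = (a_n) is an evanescent sequence and b = (b_ω) is an admissible gauge with respect to a. Then for any family of reals (c_ω)_{ω∈Ω*} with |c_ω| ≤ b_ω for all ω, the Haar series Σ_{ω∈Ω*} c_ω h_ω converges and represents a unique function in C^a(Ω); moreover, the set H_b of all functions obtained in this way is a compact subset of the Banach space C^a(Ω). -/
open Filter Set MeasureTheory

abbrev Omega : Type := ℕ → Bool

def shift (x : Omega) : Omega := fun n => x (n + 1)

open Classical in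
/-- The metric `d_a` on `Ω`: distance `a m` where `m` is the first disagreement. -/
noncomputable def dA (a : ℕ → ℝ) (x y : Omega) : ℝ :=
  if h : x = y then 0 else a (Nat.find (Function.ne_iff.mp h))

/-- A strictly decreasing sequence of positive reals converging to zero. -/
structure GoodSeq where
  a : ℕ → ℝ
  pos : ∀ n, 0 < a n
  anti : StrictAnti a
  lim : Tendsto a atTop (nhds 0)

/-- Membership in `C^a(Ω)`: Lipschitz with respect to the metric `d_a`. -/
def MemCa (a : ℕ → ℝ) (f : Omega → ℝ) : Prop :=
  ∃ K : ℝ, ∀ x y, |f x - f y| ≤ K * dA a x y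

def lipSet (a : ℕ → ℝ) (f : Omega → ℝ) : Set ℝ :=
  {K | 0 ≤ K ∧ ∀ x y, |f x - f y| ≤ K * dA a x y}

/-- The least Lipschitz constant w.r.t. `d_a`. -/
noncomputable def lipA (a : ℕ → ℝ) (f : Omega → ℝ) : ℝ := sInf (lipSet a f)

/-- The norm of `C^a(Ω)`: sup norm plus least Lipschitz constant. -/
noncomputable def caNorm (a : ℕ → ℝ) (f : Omega → ℝ) : ℝ := (⨆ x, |f x|) + lipA a f

lemma dA_self (a : ℕ → ℝ) (x : Omega) : dA a x x = 0 := by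
  unfold dA; exact dif_pos rfl

lemma dA_pos (p : GoodSeq) {x y : Omega} (hxy : x ≠ y) : 0 < dA p.a x y := by
  unfold dA; rw [dif_neg hxy]; exact p.pos _

lemma dA_nonneg (p : GoodSeq) (x y : Omega) : 0 ≤ dA p.a x y := by
  unfold dA; split
  · exact le_rfl
  · exact (p.pos _).le

lemma dA_le_a0 (p : GoodSeq) (x y : Omega) : dA p.a x y ≤ p.a 0 := by
  unfold dA; split
  · exact (p.pos 0).le
  · exact p.anti.antitone (Nat.zero_le _)

lemma lipSet_nonempty (p : GoodSeq) {f : Omega → ℝ} (hf : MemCa p.a f) :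
    (lipSet p.a f).Nonempty := by
  obtain ⟨K, hK⟩ := hf
  exact ⟨max K 0, le_max_right _ _, fun x y => (hK x y).trans
    (mul_le_mul_of_nonneg_right (le_max_left _ _) (dA_nonneg p x y))⟩

lemma lipSet_bddBelow (a : ℕ → ℝ) (f : Omega → ℝ) : BddBelow (lipSet a f) :=
  ⟨0, fun _ hK => hK.1⟩

lemma lipA_nonneg (p : GoodSeq) {f : Omega → ℝ} (hf : MemCa p.a f) : 0 ≤ lipA p.a f :=
  le_csInf (lipSet_nonempty p hf) fun _ hK => hK.1

lemma lipA_le (p : GoodSeq) {f : Omega → ℝ} {K : ℝ} (hK : K ∈ lipSet p.a f) :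
    lipA p.a f ≤ K := csInf_le (lipSet_bddBelow _ _) hK

lemma lipA_spec (p : GoodSeq) {f : Omega → ℝ} (hf : MemCa p.a f) (x y : Omega) :
    |f x - f y| ≤ lipA p.a f * dA p.a x y := by
  rcases eq_or_ne x y with rfl | hxy
  · simp [dA_self]
  · have hd : 0 < dA p.a x y := dA_pos p hxy
    have h1 : |f x - f y| / dA p.a x y ≤ lipA p.a f :=
      le_csInf (lipSet_nonempty p hf) (fun K hK => (div_le_iff₀ hd).2 (hK.2 x y))
    calc |f x - f y| = |f x - f y| / dA p.a x y * dA p.a x y := by field_simp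
      _ ≤ _ := mul_le_mul_of_nonneg_right h1 hd.le

lemma bddAbove_abs (p : GoodSeq) {f : Omega → ℝ} (hf : MemCa p.a f) :
    BddAbove (Set.range fun x => |f x|) := by
  refine ⟨|f (fun _ => false)| + lipA p.a f * p.a 0, ?_⟩
  rintro r ⟨x, rfl⟩
  have h1 : |f x| ≤ |f (fun _ => false)| + |f x - f (fun _ => false)| := by
    have := abs_add_le (f (fun _ => false)) (f x - f (fun _ => false))
    simpa using this
  refine h1.trans (add_le_add le_rfl ?_)
  refine (lipA_spec p hf x _).trans ?_
  exact mul_le_mul_of_nonneg_left (dA_le_a0 p _ _) (lipA_nonneg p hf)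

lemma le_caSup (p : GoodSeq) {f : Omega → ℝ} (hf : MemCa p.a f) (x : Omega) :
    |f x| ≤ ⨆ y, |f y| := le_ciSup (bddAbove_abs p hf) x

/-- The Lipschitz functions form a linear subspace of `Ω → ℝ`. -/
noncomputable def caSub (a : ℕ → ℝ) : Submodule ℝ (Omega → ℝ) where
  carrier := {f | MemCa a f}
  add_mem' := by
    rintro f g ⟨K, hK⟩ ⟨L, hL⟩
    refine ⟨K + L, fun x y => ?_⟩
    calc |(f + g) x - (f + g) y| = |(f x - f y) + (g x - g y)| := by
          simp only [Pi.add_apply]; ring_nf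
      _ ≤ |f x - f y| + |g x - g y| := abs_add_le _ _
      _ ≤ K * dA a x y + L * dA a x y := add_le_add (hK x y) (hL x y)
      _ = (K + L) * dA a x y := by ring
  zero_mem' := ⟨0, by simp⟩
  smul_mem' := by
    rintro c f ⟨K, hK⟩
    refine ⟨|c| * K, fun x y => ?_⟩
    calc |(c • f) x - (c • f) y| = |c| * |f x - f y| := by
          simp only [Pi.smul_apply, smul_eq_mul]
          rw [← abs_mul]; ring_nf
      _ ≤ |c| * (K * dA a x y) := mul_le_mul_of_nonneg_left (hK x y) (abs_nonneg c)
      _ = |c| * K * dA a x y := by ring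

/-- The Banach space `C^a(Ω)` of `d_a`-Lipschitz functions. -/
def CaSpace (p : GoodSeq) : Type := ↥(caSub p.a)

noncomputable instance (p : GoodSeq) : AddCommGroup (CaSpace p) :=
  inferInstanceAs (AddCommGroup ↥(caSub p.a))

noncomputable instance (p : GoodSeq) : Module ℝ (CaSpace p) :=
  inferInstanceAs (Module ℝ ↥(caSub p.a))

/-- The underlying function of an element of `C^a(Ω)`. -/
def CaSpace.fn {p : GoodSeq} (F : CaSpace p) : Omega → ℝ := Subtype.val F

lemma CaSpace.memCa {p : GoodSeq} (F : CaSpace p) : MemCa p.a F.fn := Subtype.prop F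

lemma lipA_zero (p : GoodSeq) : lipA p.a 0 = 0 := by
  refine le_antisymm (lipA_le p ⟨le_rfl, fun x y => by simp [dA_nonneg]⟩)
    (lipA_nonneg p ⟨0, by simp⟩)

lemma abs_neg_sub (f : Omega → ℝ) (x y : Omega) : |(-f) x - (-f) y| = |f x - f y| := by
  simp only [Pi.neg_apply]
  rw [show -f x - -f y = -(f x - f y) by ring, abs_neg]

lemma lipSet_neg (a : ℕ → ℝ) (f : Omega → ℝ) : lipSet a (-f) = lipSet a f := by
  ext K
  constructor <;> intro h <;> refine ⟨h.1, fun x y => ?_⟩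
  · have := h.2 x y
    rwa [abs_neg_sub] at this
  · have := h.2 x y
    rw [abs_neg_sub]
    exact this

/-- The Lipschitz norm on `C^a(Ω)` as an `AddGroupNorm`. -/
noncomputable def caAGN (p : GoodSeq) : AddGroupNorm (CaSpace p) where
  toFun F := caNorm p.a F.fn
  map_zero' := by
    show caNorm p.a (0 : CaSpace p).fn = 0
    have h0 : (0 : CaSpace p).fn = (0 : Omega → ℝ) := rfl
    rw [h0]
    unfold caNorm
    rw [lipA_zero]
    simp
  add_le' F G := by
    show caNorm p.a (F + G).fn ≤ caNorm p.a F.fn + caNorm p.a G.fn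
    have hadd : (F + G).fn = F.fn + G.fn := rfl
    unfold caNorm
    rw [hadd]
    have h1 : (⨆ x, |(F.fn + G.fn) x|) ≤ (⨆ x, |F.fn x|) + ⨆ x, |G.fn x| := by
      refine ciSup_le fun x => ?_
      calc |(F.fn + G.fn) x| ≤ |F.fn x| + |G.fn x| := abs_add_le _ _
        _ ≤ _ := add_le_add (le_caSup p F.memCa x) (le_caSup p G.memCa x)
    have h2 : lipA p.a (F.fn + G.fn) ≤ lipA p.a F.fn + lipA p.a G.fn := by
      refine lipA_le p ⟨add_nonneg (lipA_nonneg p F.memCa) (lipA_nonneg p G.memCa),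
        fun x y => ?_⟩
      calc |(F.fn + G.fn) x - (F.fn + G.fn) y|
          = |(F.fn x - F.fn y) + (G.fn x - G.fn y)| := by
            simp only [Pi.add_apply]; ring_nf
        _ ≤ |F.fn x - F.fn y| + |G.fn x - G.fn y| := abs_add_le _ _
        _ ≤ lipA p.a F.fn * dA p.a x y + lipA p.a G.fn * dA p.a x y :=
            add_le_add (lipA_spec p F.memCa x y) (lipA_spec p G.memCa x y)
        _ = (lipA p.a F.fn + lipA p.a G.fn) * dA p.a x y := by ring
    linarith
  neg' F := by
    show caNorm p.a (-F).fn = caNorm p.a F.fn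
    have hneg : (-F).fn = -(F.fn) := rfl
    unfold caNorm
    rw [hneg]
    congr 1
    · exact iSup_congr fun x => by simp
    · unfold lipA; rw [lipSet_neg]
  eq_zero_of_map_eq_zero' F h := by
    have h' : caNorm p.a F.fn = 0 := h
    have hsup0 : 0 ≤ ⨆ x, |F.fn x| :=
      le_trans (abs_nonneg _) (le_caSup p F.memCa (fun _ => false))
    have hlip0 := lipA_nonneg p F.memCa
    unfold caNorm at h'
    have hsup : (⨆ x, |F.fn x|) = 0 := by linarith
    have hz : ∀ x, F.fn x = 0 := by
      intro x
      have := le_caSup p F.memCa x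
      rw [hsup] at this
      exact abs_nonpos_iff.mp this
    exact Subtype.ext (funext hz)

noncomputable instance (p : GoodSeq) : NormedAddCommGroup (CaSpace p) :=
  (caAGN p).toNormedAddCommGroup

noncomputable instance (p : GoodSeq) : MeasurableSpace (CaSpace p) := borel (CaSpace p)

/-- The Haar function `h_ω = (χ_{[ω0]} − χ_{[ω1]})/2` for a finite word `ω`. -/
noncomputable def haar (w : List Bool) (x : Omega) : ℝ :=
  if ∀ i : Fin w.length, x (i : ℕ) = w.get i then
    (if x w.length = false then 1 / 2 else -(1 / 2)) else 0

/-- `b̄_n = max_{|ω|=n} b_ω`. -/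
noncomputable def gaugeMax (b : List Bool → ℝ) (n : ℕ) : ℝ :=
  sSup {r | ∃ w : List Bool, w.length = n ∧ r = b w}

/-- `b̲_n = min_{|ω|=n} b_ω`. -/
noncomputable def gaugeMin (b : List Bool → ℝ) (n : ℕ) : ℝ :=
  sInf {r | ∃ w : List Bool, w.length = n ∧ r = b w}


namespace HilbertBrickAux

/-! ### Prefixes and Haar functions -/

noncomputable def preW (x : Omega) (n : ℕ) : List Bool := List.ofFn fun i : Fin n => x i

@[simp] lemma preW_length (x : Omega) (n : ℕ) : (preW x n).length = n := by
  simp [preW]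

lemma preW_inj (x : Omega) : Function.Injective (preW x) := by
  intro m n h
  have := congrArg List.length h
  simpa using this

lemma haar_preW (x : Omega) (n : ℕ) :
    haar (preW x n) x = if x n = false then 1 / 2 else -(1 / 2) := by
  have hcond : ∀ i : Fin (preW x n).length, x (i : ℕ) = (preW x n).get i := by
    intro i
    rw [List.get_eq_getElem]
    exact (List.getElem_ofFn (f := fun j : Fin n => x j) (i := i.1) (h := i.2)).symm
  unfold haar
  rw [if_pos hcond, preW_length]

lemma haar_eq_zero_of_ne {w : List Bool} {x : Omega} (h : w ≠ preW x w.length) :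
    haar w x = 0 := by
  unfold haar
  rw [if_neg]
  intro hcond
  apply h
  refine List.ext_get (by simp) fun i h1 h2 => ?_
  rw [← hcond ⟨i, h1⟩]
  simp [preW, List.get_ofFn]

lemma abs_haar_le (w : List Bool) (x : Omega) : |haar w x| ≤ 1 / 2 := by
  unfold haar
  split_ifs <;> simp [abs_le] <;> norm_num

lemma preW_eq {x y : Omega} {n : ℕ} (h : ∀ i < n, x i = y i) : preW x n = preW y n := by
  unfold preW
  congr 1
  funext i
  exact h i i.isLt

lemma term_eq (c : List Bool → ℝ) {x y : Omega} {n m : ℕ} (hn : n < m)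
    (h : ∀ i < m, x i = y i) :
    c (preW x n) * haar (preW x n) x = c (preW y n) * haar (preW y n) y := by
  rw [haar_preW, haar_preW, preW_eq (fun i hi => h i (hi.trans hn)), h n hn]

/-! ### gaugeMax -/

lemma gaugeMax_bddAbove (b : List Bool → ℝ) (n : ℕ) :
    BddAbove {r | ∃ w : List Bool, w.length = n ∧ r = b w} := by
  apply Set.Finite.bddAbove
  have h : {r | ∃ w : List Bool, w.length = n ∧ r = b w} = b '' {w | w.length = n} := by
    ext r
    constructor
    · rintro ⟨w, h1, rfl⟩; exact ⟨w, h1, rfl⟩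
    · rintro ⟨w, h1, rfl⟩; exact ⟨w, h1, rfl⟩
  rw [h]
  exact (List.finite_length_eq Bool n).image b

lemma le_gaugeMax (b : List Bool → ℝ) (w : List Bool) : b w ≤ gaugeMax b w.length :=
  le_csSup (gaugeMax_bddAbove b _) ⟨w, rfl, rfl⟩

lemma gaugeMax_nonneg {b : List Bool → ℝ} (hbpos : ∀ w, 0 < b w) (n : ℕ) :
    0 ≤ gaugeMax b n := by
  have h1 := le_gaugeMax b (List.replicate n false)
  have h2 := hbpos (List.replicate n false)
  rw [List.length_replicate] at h1
  linarith

/-! ### Sequence estimates -/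

lemma ratio_half (p : GoodSeq)
    (heva : (fun n => p.a (n + 1) / p.a n) =O[atTop]
      fun n => ((2 : ℝ) ^ (2 ^ (n + 2) : ℕ))⁻¹) :
    ∃ N, ∀ n ≥ N, p.a (n + 1) ≤ p.a n / 2 := by
  obtain ⟨C, hC⟩ := heva.isBigOWith
  rw [Asymptotics.isBigOWith_iff] at hC
  have h2 : Tendsto (fun n : ℕ => 2 ^ (n + 2)) atTop atTop := by
    apply tendsto_atTop_mono (fun n => ?_) tendsto_id
    calc id n = n := rfl
      _ ≤ 2 ^ n := (Nat.lt_two_pow_self).le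
      _ ≤ 2 ^ (n + 2) := Nat.pow_le_pow_right (by norm_num) (by omega)
  have hA : Tendsto (fun n : ℕ => (2 : ℝ) ^ (2 ^ (n + 2) : ℕ)) atTop atTop :=
    (tendsto_pow_atTop_atTop_of_one_lt (by norm_num : (1:ℝ) < 2)).comp h2
  have hA' : ∀ᶠ n in atTop, 2 * C ≤ (2 : ℝ) ^ (2 ^ (n + 2) : ℕ) :=
    hA.eventually_ge_atTop (2 * C)
  have hfin : ∀ᶠ n : ℕ in atTop, p.a (n + 1) ≤ p.a n / 2 := by
    filter_upwards [hC, hA'] with n h1 h3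
    have hX : (0:ℝ) < (2 : ℝ) ^ (2 ^ (n + 2) : ℕ) := by positivity
    have h4 : C * ‖((2 : ℝ) ^ (2 ^ (n + 2) : ℕ))⁻¹‖ ≤ 1 / 2 := by
      rw [Real.norm_eq_abs, abs_inv, abs_of_pos hX]
      have h5 : C ≤ (2 : ℝ) ^ (2 ^ (n + 2) : ℕ) / 2 := by linarith
      calc C * ((2 : ℝ) ^ (2 ^ (n + 2) : ℕ))⁻¹
          ≤ ((2 : ℝ) ^ (2 ^ (n + 2) : ℕ) / 2) * ((2 : ℝ) ^ (2 ^ (n + 2) : ℕ))⁻¹ :=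
            mul_le_mul_of_nonneg_right h5 (by positivity)
        _ = 1 / 2 := by field_simp
    have h6 : p.a (n + 1) / p.a n ≤ 1 / 2 := by
      have h6' := h1.trans h4
      rw [Real.norm_eq_abs] at h6'
      exact (le_abs_self _).trans h6'
    have hp := p.pos n
    rw [div_le_iff₀ hp] at h6
    linarith
  rw [eventually_atTop] at hfin
  exact hfin

lemma a_tail (p : GoodSeq) {N : ℕ} (hN : ∀ n ≥ N, p.a (n + 1) ≤ p.a n / 2) :
    ∀ m ≥ N, ∀ k, p.a (m + k) ≤ p.a m * (1 / 2) ^ k := by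
  intro m hm k
  induction k with
  | zero => simp
  | succ k ih =>
    have h1 : p.a (m + k + 1) ≤ p.a (m + k) / 2 :=
      hN _ (le_trans hm (Nat.le_add_right _ _))
    calc p.a (m + (k + 1)) = p.a (m + k + 1) := rfl
      _ ≤ p.a (m + k) / 2 := h1
      _ ≤ (p.a m * (1 / 2) ^ k) / 2 := by linarith
      _ = p.a m * (1 / 2) ^ (k + 1) := by ring

lemma summable_a (p : GoodSeq) {N : ℕ} (hN : ∀ n ≥ N, p.a (n + 1) ≤ p.a n / 2) :
    Summable p.a := by
  rw [← summable_nat_add_iff N]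
  apply Summable.of_nonneg_of_le (fun k => (p.pos _).le) (fun k => ?_)
    (summable_geometric_two.mul_left (p.a N))
  have := a_tail p hN N le_rfl k
  rwa [Nat.add_comm] at this

lemma tsum_a_tail (p : GoodSeq) {N : ℕ} (hN : ∀ n ≥ N, p.a (n + 1) ≤ p.a n / 2)
    {m : ℕ} (hm : N ≤ m) : ∑' k, p.a (k + m) ≤ 2 * p.a m := by
  have hs : Summable fun k => p.a (k + m) := (summable_nat_add_iff m).mpr (summable_a p hN)
  calc ∑' k, p.a (k + m) ≤ ∑' k : ℕ, p.a m * (1 / 2) ^ k := by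
        refine Summable.tsum_le_tsum (fun k => ?_) hs (summable_geometric_two.mul_left _)
        have := a_tail p hN m hm k
        rwa [Nat.add_comm m k] at this
    _ = p.a m * 2 := by rw [tsum_mul_left, tsum_geometric_two]
    _ = 2 * p.a m := by ring

lemma gmax_small {p : GoodSeq} {b : List Bool → ℝ}
    (hadm₁ : (fun n => gaugeMax b n) =o[atTop] p.a) {ε : ℝ} (hε : 0 < ε) :
    ∃ N, ∀ n ≥ N, gaugeMax b n ≤ ε * p.a n := by
  have h := hadm₁.def hε
  rw [eventually_atTop] at h
  obtain ⟨N, hN⟩ := h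
  refine ⟨N, fun n hn => ?_⟩
  have h1 := hN n hn
  rw [Real.norm_eq_abs, Real.norm_eq_abs, abs_of_pos (p.pos n)] at h1
  exact (le_abs_self _).trans h1

lemma summable_gmax {p : GoodSeq} {b : List Bool → ℝ} (hbpos : ∀ w, 0 < b w)
    {N₀ : ℕ} (hN₀ : ∀ n ≥ N₀, p.a (n + 1) ≤ p.a n / 2)
    (hadm₁ : (fun n => gaugeMax b n) =o[atTop] p.a) :
    Summable (gaugeMax b) := by
  obtain ⟨N₁, hN₁⟩ := gmax_small hadm₁ one_pos
  rw [← summable_nat_add_iff N₁]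
  apply Summable.of_nonneg_of_le (fun k => gaugeMax_nonneg hbpos _) (fun k => ?_)
    ((summable_nat_add_iff N₁).mpr (summable_a p hN₀))
  have := hN₁ (k + N₁) (Nat.le_add_left _ _)
  linarith

noncomputable def Ttail (b : List Bool → ℝ) (m : ℕ) : ℝ := ∑' k, gaugeMax b (k + m)

lemma tsum_tail_le {u : ℕ → ℝ} (hu : Summable u) (h0 : ∀ n, 0 ≤ u n) (m : ℕ) :
    ∑' k, u (k + m) ≤ ∑' n, u n := by
  have h1 := Summable.sum_add_tsum_nat_add m hu
  have h2 : 0 ≤ ∑ i ∈ Finset.range m, u i := Finset.sum_nonneg fun i _ => h0 i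
  linarith

lemma Ttail_nonneg {b : List Bool → ℝ} (hbpos : ∀ w, 0 < b w) (m : ℕ) :
    0 ≤ Ttail b m :=
  tsum_nonneg fun k => gaugeMax_nonneg hbpos _

lemma Ttail_small {p : GoodSeq} {b : List Bool → ℝ}
    (heva : (fun n => p.a (n + 1) / p.a n) =O[atTop]
      fun n => ((2 : ℝ) ^ (2 ^ (n + 2) : ℕ))⁻¹)
    (hbpos : ∀ w, 0 < b w)
    (hadm₁ : (fun n => gaugeMax b n) =o[atTop] p.a) {ε : ℝ} (hε : 0 < ε) :
    ∃ M, ∀ m ≥ M, Ttail b m ≤ ε * p.a m := by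
  obtain ⟨N₀, hN₀⟩ := ratio_half p heva
  obtain ⟨N₁, hN₁⟩ := gmax_small hadm₁ (half_pos hε)
  refine ⟨max N₀ N₁, fun m hm => ?_⟩
  have hm0 : N₀ ≤ m := le_trans (le_max_left _ _) hm
  have hm1 : N₁ ≤ m := le_trans (le_max_right _ _) hm
  have hsg : Summable (gaugeMax b) := summable_gmax hbpos hN₀ hadm₁
  have hsgt : Summable fun k => gaugeMax b (k + m) := (summable_nat_add_iff m).mpr hsg
  have hsat : Summable fun k => p.a (k + m) :=
    (summable_nat_add_iff m).mpr (summable_a p hN₀)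
  calc Ttail b m ≤ ∑' k, (ε / 2) * p.a (k + m) := by
        refine Summable.tsum_le_tsum (fun k => ?_) hsgt (hsat.mul_left _)
        exact hN₁ _ (le_trans hm1 (Nat.le_add_left _ _))
    _ = (ε / 2) * ∑' k, p.a (k + m) := tsum_mul_left
    _ ≤ (ε / 2) * (2 * p.a m) :=
        mul_le_mul_of_nonneg_left (tsum_a_tail p hN₀ hm0) (half_pos hε).le
    _ = ε * p.a m := by ring

/-! ### The sum of the Haar series -/

noncomputable def Ssum (c : List Bool → ℝ) (x : Omega) : ℝ :=
  ∑' n, c (preW x n) * haar (preW x n) x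

section Master

variable {u : ℕ → ℝ} {c : List Bool → ℝ}

lemma term_abs_le (hu0 : ∀ n, 0 ≤ u n) (hc : ∀ w, |c w| ≤ u w.length) (x : Omega) (n : ℕ) :
    |c (preW x n) * haar (preW x n) x| ≤ u n := by
  rw [abs_mul]
  have h1 := hc (preW x n)
  rw [preW_length] at h1
  have h2 := abs_haar_le (preW x n) x
  nlinarith [abs_nonneg (c (preW x n)), abs_nonneg (haar (preW x n) x), hu0 n]

lemma summable_term (hu0 : ∀ n, 0 ≤ u n) (hus : Summable u)
    (hc : ∀ w, |c w| ≤ u w.length) (x : Omega) :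
    Summable fun n => c (preW x n) * haar (preW x n) x :=
  Summable.of_norm_bounded hus fun n => by
    rw [Real.norm_eq_abs]
    exact term_abs_le hu0 hc x n

lemma hasSum_haar (hu0 : ∀ n, 0 ≤ u n) (hus : Summable u)
    (hc : ∀ w, |c w| ≤ u w.length) (x : Omega) :
    HasSum (fun w : List Bool => c w * haar w x) (Ssum c x) := by
  have hvan : ∀ w ∉ Set.range (preW x), c w * haar w x = 0 := by
    intro w hw
    have hne : w ≠ preW x w.length := fun h => hw ⟨w.length, h.symm⟩
    rw [haar_eq_zero_of_ne hne, mul_zero]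
  exact ((preW_inj x).hasSum_iff hvan).mp (summable_term hu0 hus hc x).hasSum

lemma abs_Ssum_le (hu0 : ∀ n, 0 ≤ u n) (hus : Summable u)
    (hc : ∀ w, |c w| ≤ u w.length) (x : Omega) :
    |Ssum c x| ≤ ∑' n, u n := by
  have hsabs : Summable fun n => |c (preW x n) * haar (preW x n) x| :=
    Summable.of_nonneg_of_le (fun n => abs_nonneg _) (term_abs_le hu0 hc x) hus
  have h1 : |Ssum c x| ≤ ∑' n, |c (preW x n) * haar (preW x n) x| := by
    simpa only [Ssum, Real.norm_eq_abs] using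
      norm_tsum_le_tsum_norm (f := fun n => c (preW x n) * haar (preW x n) x)
        (by simpa only [Real.norm_eq_abs] using hsabs)
  exact h1.trans (Summable.tsum_le_tsum (term_abs_le hu0 hc x) hsabs hus)

lemma abs_Ssum_diff_le (hu0 : ∀ n, 0 ≤ u n) (hus : Summable u)
    (hc : ∀ w, |c w| ≤ u w.length) {x y : Omega} {m : ℕ}
    (hxy : ∀ i < m, x i = y i) :
    |Ssum c x - Ssum c y| ≤ 2 * ∑' k, u (k + m) := by
  set t1 : ℕ → ℝ := fun n => c (preW x n) * haar (preW x n) x with ht1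
  set t2 : ℕ → ℝ := fun n => c (preW y n) * haar (preW y n) y with ht2
  have hs1 : Summable t1 := summable_term hu0 hus hc x
  have hs2 : Summable t2 := summable_term hu0 hus hc y
  set v : ℕ → ℝ := fun n => if n < m then 0 else 2 * u n with hv
  have hv0 : ∀ n, 0 ≤ v n := by
    intro n
    simp only [hv]
    split
    · exact le_rfl
    · linarith [hu0 n]
  have hvb : ∀ n, |t1 n - t2 n| ≤ v n := by
    intro n
    simp only [hv]
    split
    · next h =>
      simp only [ht1, ht2]
      rw [term_eq c h hxy]
      simp
    · calc |t1 n - t2 n| ≤ |t1 n| + |t2 n| := abs_sub _ _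
        _ ≤ u n + u n := add_le_add (term_abs_le hu0 hc x n) (term_abs_le hu0 hc y n)
        _ = 2 * u n := by ring
  have hsv : Summable v := by
    rw [← summable_nat_add_iff m]
    have : (fun k => v (k + m)) = fun k => 2 * u (k + m) := by
      funext k
      simp only [hv]
      rw [if_neg (by omega)]
    rw [this]
    exact ((summable_nat_add_iff m).mpr hus).mul_left 2
  have hsd : Summable fun n => t1 n - t2 n := hs1.sub hs2
  have hsda : Summable fun n => |t1 n - t2 n| :=
    Summable.of_nonneg_of_le (fun n => abs_nonneg _) hvb hsv
  have h1 : Ssum c x - Ssum c y = ∑' n, (t1 n - t2 n) := (Summable.tsum_sub hs1 hs2).symm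
  have h2 : |∑' n, (t1 n - t2 n)| ≤ ∑' n, |t1 n - t2 n| := by
    simpa only [Real.norm_eq_abs] using
      norm_tsum_le_tsum_norm (f := fun n => t1 n - t2 n)
        (by simpa only [Real.norm_eq_abs] using hsda)
  have h3 : ∑' n, |t1 n - t2 n| ≤ ∑' n, v n := Summable.tsum_le_tsum hvb hsda hsv
  have h4 : ∑' n, v n = 2 * ∑' k, u (k + m) := by
    have h5 := Summable.sum_add_tsum_nat_add m hsv
    have h6 : ∑ i ∈ Finset.range m, v i = 0 := by
      apply Finset.sum_eq_zero
      intro i hi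
      simp only [hv]
      rw [if_pos (Finset.mem_range.mp hi)]
    have h7 : ∑' k, v (k + m) = ∑' k, 2 * u (k + m) := by
      apply tsum_congr
      intro k
      simp only [hv]
      rw [if_neg (by omega)]
    rw [← h5, h6, h7, tsum_mul_left]
    ring
  rw [h1]
  calc |∑' n, (t1 n - t2 n)| ≤ ∑' n, |t1 n - t2 n| := h2
    _ ≤ ∑' n, v n := h3
    _ = 2 * ∑' k, u (k + m) := h4

end Master

lemma Ssum_sub {c c' : List Bool → ℝ} (x : Omega)
    (h1 : Summable fun n => c (preW x n) * haar (preW x n) x)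
    (h2 : Summable fun n => c' (preW x n) * haar (preW x n) x) :
    Ssum (fun w => c w - c' w) x = Ssum c x - Ssum c' x := by
  unfold Ssum
  rw [← Summable.tsum_sub h1 h2]
  apply tsum_congr
  intro n
  ring

/-! ### The `C^a` bound -/

lemma dA_eq_find {p : GoodSeq} {x y : Omega} (hxy : x ≠ y) :
    dA p.a x y = p.a (Nat.find (Function.ne_iff.mp hxy)) := by
  unfold dA
  exact dif_neg hxy

lemma memCa_Ssum (p : GoodSeq)
    (heva : (fun n => p.a (n + 1) / p.a n) =O[atTop]
      fun n => ((2 : ℝ) ^ (2 ^ (n + 2) : ℕ))⁻¹)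
    {b : List Bool → ℝ} (hbpos : ∀ w, 0 < b w)
    (hadm₁ : (fun n => gaugeMax b n) =o[atTop] p.a)
    {c : List Bool → ℝ} (hc : ∀ w, |c w| ≤ b w) : MemCa p.a (Ssum c) := by
  obtain ⟨N₀, hN₀⟩ := ratio_half p heva
  have hsg : Summable (gaugeMax b) := summable_gmax hbpos hN₀ hadm₁
  have hg0 : ∀ n, 0 ≤ gaugeMax b n := gaugeMax_nonneg hbpos
  have hc' : ∀ w, |c w| ≤ gaugeMax b w.length := fun w => (hc w).trans (le_gaugeMax b w)
  obtain ⟨M, hM⟩ := Ttail_small heva hbpos hadm₁ one_pos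
  set T0 : ℝ := ∑' n, gaugeMax b n with hT0
  have hT0nn : 0 ≤ T0 := tsum_nonneg hg0
  refine ⟨max 2 (2 * T0 / p.a M), fun x y => ?_⟩
  rcases eq_or_ne x y with rfl | hxy
  · simp [dA_self]
  · rw [dA_eq_find hxy]
    set m := Nat.find (Function.ne_iff.mp hxy) with hm
    have hagree : ∀ i < m, x i = y i := fun i hi => not_not.mp (Nat.find_min _ hi)
    have hbound : |Ssum c x - Ssum c y| ≤ 2 * Ttail b m :=
      abs_Ssum_diff_le hg0 hsg hc' hagree
    rcases le_or_gt M m with hMm | hMm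
    · have h1 : Ttail b m ≤ 1 * p.a m := hM m hMm
      have h2 : (2:ℝ) ≤ max 2 (2 * T0 / p.a M) := le_max_left _ _
      have hp := p.pos m
      calc |Ssum c x - Ssum c y| ≤ 2 * Ttail b m := hbound
        _ ≤ 2 * p.a m := by linarith
        _ ≤ max 2 (2 * T0 / p.a M) * p.a m := mul_le_mul_of_nonneg_right h2 hp.le
    · have h1 : Ttail b m ≤ T0 := tsum_tail_le hsg hg0 m
      have h2 : p.a M ≤ p.a m := p.anti.antitone hMm.le
      have hpM := p.pos M
      have h3 : 2 * T0 = (2 * T0 / p.a M) * p.a M := by field_simp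
      have h4 : 0 ≤ 2 * T0 / p.a M := by positivity
      calc |Ssum c x - Ssum c y| ≤ 2 * Ttail b m := hbound
        _ ≤ 2 * T0 := by linarith
        _ = (2 * T0 / p.a M) * p.a M := h3
        _ ≤ (2 * T0 / p.a M) * p.a m := mul_le_mul_of_nonneg_left h2 h4
        _ ≤ max 2 (2 * T0 / p.a M) * p.a m :=
            mul_le_mul_of_nonneg_right (le_max_right _ _) (p.pos m).le

lemma caNorm_le' (p : GoodSeq) (F : CaSpace p) {A K : ℝ} (hA : ∀ x, |F.fn x| ≤ A)
    (hK : K ∈ lipSet p.a F.fn) : ‖F‖ ≤ A + K := by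
  have h1 : ‖F‖ = caNorm p.a F.fn := rfl
  rw [h1]
  unfold caNorm
  exact add_le_add (ciSup_le hA) (lipA_le p hK)

end HilbertBrickAux

open HilbertBrickAux in
/-- **Hilbert bricks are well defined and compact.**  Suppose `a = (a_n)` is an
evanescent sequence (strictly decreasing, positive, `a_n → 0`, and
`a_{n+1}/a_n = O(2^{-2^{n+2}})`) and `b = (b_ω)` is an admissible gauge with respect to
`a` (positive, `b̄_n = o(a_n)`, `log(a_n/b̲_n) = O(n)`).  Then for any family of reals
`(c_ω)` with `|c_ω| ≤ b_ω` for all `ω`, the Haar series `Σ_ω c_ω h_ω` converges and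
represents a unique function of `C^a(Ω)`; moreover, the set `H_b` of all functions
obtained in this way is a compact subset of the Banach space `C^a(Ω)`. -/
theorem hilbert_brick_unique_and_compact (p : GoodSeq)
    (heva : (fun n => p.a (n + 1) / p.a n) =O[atTop]
      fun n => ((2 : ℝ) ^ (2 ^ (n + 2) : ℕ))⁻¹)
    (b : List Bool → ℝ) (hbpos : ∀ w, 0 < b w)
    (hadm₁ : (fun n => gaugeMax b n) =o[atTop] p.a)
    (hadm₂ : (fun n => Real.log (p.a n / gaugeMin b n)) =O[atTop] fun n => (n : ℝ)) :
    (∀ c : List Bool → ℝ, (∀ w, |c w| ≤ b w) →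
      ∃! f : Omega → ℝ, MemCa p.a f ∧
        ∀ x, HasSum (fun w : List Bool => c w * haar w x) (f x)) ∧
    IsCompact {F : CaSpace p | ∃ c : List Bool → ℝ, (∀ w, |c w| ≤ b w) ∧
      ∀ x, HasSum (fun w : List Bool => c w * haar w x) (F.fn x)} := by
  classical
  obtain ⟨N₀, hN₀⟩ := ratio_half p heva
  have hsg : Summable (gaugeMax b) := summable_gmax hbpos hN₀ hadm₁
  have hg0 : ∀ n, 0 ≤ gaugeMax b n := gaugeMax_nonneg hbpos
  constructor
  · intro c hc
    have hc' : ∀ w, |c w| ≤ gaugeMax b w.length := fun w => (hc w).trans (le_gaugeMax b w)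
    refine ⟨Ssum c, ⟨memCa_Ssum p heva hbpos hadm₁ hc,
      fun x => hasSum_haar hg0 hsg hc' x⟩, ?_⟩
    rintro g ⟨_, hg2⟩
    funext x
    exact (hg2 x).unique (hasSum_haar hg0 hsg hc' x)
  · set Kset : Set (List Bool → ℝ) := Set.univ.pi (fun w => Set.Icc (-(b w)) (b w))
      with hKsetdef
    have hmem_iff : ∀ c : List Bool → ℝ, c ∈ Kset ↔ ∀ w, |c w| ≤ b w := by
      intro c
      rw [hKsetdef, Set.mem_univ_pi]
      exact ⟨fun h w => abs_le.mpr (Set.mem_Icc.mp (h w)),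
        fun h w => Set.mem_Icc.mpr (abs_le.mp (h w))⟩
    have hKc : IsCompact Kset := isCompact_univ_pi fun w => isCompact_Icc
    haveI : CompactSpace Kset := isCompact_iff_compactSpace.mp hKc
    set ψ : Kset → CaSpace p := fun c =>
      ⟨Ssum c.1, memCa_Ssum p heva hbpos hadm₁ ((hmem_iff c.1).mp c.2)⟩ with hψdef
    have hcK : ∀ c : Kset, ∀ w, |c.1 w| ≤ gaugeMax b w.length :=
      fun c w => (((hmem_iff c.1).mp c.2) w).trans (le_gaugeMax b w)
    have hsetEq : {F : CaSpace p | ∃ c : List Bool → ℝ, (∀ w, |c w| ≤ b w) ∧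
        ∀ x, HasSum (fun w : List Bool => c w * haar w x) (F.fn x)} = Set.range ψ := by
      ext F
      constructor
      · rintro ⟨c, hc, hsum⟩
        refine ⟨⟨c, (hmem_iff c).mpr hc⟩, ?_⟩
        apply Subtype.ext
        funext x
        exact (hasSum_haar hg0 hsg (fun w => (hc w).trans (le_gaugeMax b w)) x).unique (hsum x)
      · rintro ⟨c, rfl⟩
        exact ⟨c.1, (hmem_iff c.1).mp c.2, fun x => hasSum_haar hg0 hsg (hcK c) x⟩
    rw [hsetEq]
    apply isCompact_range
    rw [continuous_iff_continuousAt]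
    intro c₀
    apply Metric.tendsto_nhds.mpr
    intro ε hε
    have ha0 := p.pos 0
    set ε₁ : ℝ := ε / (8 * (1 + p.a 0)) with hε₁def
    have hε₁ : 0 < ε₁ := by positivity
    obtain ⟨M₀, hM₀⟩ := Ttail_small heva hbpos hadm₁ hε₁
    set M := max M₀ 1 with hMdef
    have hM : ∀ m, M ≤ m → Ttail b m ≤ ε₁ * p.a m :=
      fun m hm => hM₀ m (le_trans (le_max_left _ _) hm)
    have hM1 : (1:ℝ) ≤ (M:ℝ) := by exact_mod_cast le_max_right M₀ 1
    have haM : 0 < p.a M := p.pos M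
    have hfacpos : 0 < 1 + 2 / p.a M := by positivity
    have hMR : (0:ℝ) < (M:ℝ) := by linarith
    set Q : ℝ := (M:ℝ) * (1 + 2 / p.a M) with hQdef
    have hQ : 0 < Q := mul_pos hMR hfacpos
    set δ : ℝ := (ε / 4) / Q with hδdef
    have hδ : 0 < δ := div_pos (by linarith) hQ
    have hδQ : δ * Q = ε / 4 := div_mul_cancel₀ _ hQ.ne'
    have hev : ∀ᶠ c : Kset in nhds c₀,
        ∀ w ∈ {w : List Bool | w.length < M}, |c.1 w - c₀.1 w| < δ := by
      rw [eventually_all_finite (List.finite_length_lt Bool M)]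
      intro w _
      have hcontw : Continuous fun c : Kset => c.1 w :=
        (continuous_apply w).comp continuous_subtype_val
      have hball : ∀ᶠ r : ℝ in nhds (c₀.1 w), |r - c₀.1 w| < δ := by
        filter_upwards [Metric.ball_mem_nhds (c₀.1 w) hδ] with r hr
        rwa [Metric.mem_ball, Real.dist_eq] at hr
      exact (hcontw.tendsto c₀).eventually hball
    filter_upwards [hev] with c hc
    rw [dist_eq_norm]
    set d : List Bool → ℝ := fun w => c.1 w - c₀.1 w with hddef
    set uM : ℕ → ℝ := fun n => if n < M then δ else 2 * gaugeMax b n with huMdef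
    have huM0 : ∀ n, 0 ≤ uM n := by
      intro n
      simp only [huMdef]
      split
      · exact hδ.le
      · linarith [hg0 n]
    have huMs : Summable uM := by
      rw [← summable_nat_add_iff M]
      have he : (fun k => uM (k + M)) = fun k => 2 * gaugeMax b (k + M) := by
        funext k
        simp only [huMdef]
        rw [if_neg (by omega)]
      rw [he]
      exact ((summable_nat_add_iff M).mpr hsg).mul_left 2
    have hd : ∀ w, |d w| ≤ uM w.length := by
      intro w
      simp only [huMdef, hddef]
      split
      · next h => exact (hc w h).le
      · have h1 := hcK c w
        have h2 := hcK c₀ w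
        calc |c.1 w - c₀.1 w| ≤ |c.1 w| + |c₀.1 w| := abs_sub _ _
          _ ≤ 2 * gaugeMax b w.length := by linarith
    have htot : ∑' n, uM n ≤ (M:ℝ) * δ + 2 * Ttail b M := by
      have h5 := Summable.sum_add_tsum_nat_add M huMs
      have h6 : ∑ i ∈ Finset.range M, uM i = (M:ℝ) * δ := by
        have h6' : ∀ i ∈ Finset.range M, uM i = δ := fun i hi => by
          simp only [huMdef]
          rw [if_pos (Finset.mem_range.mp hi)]
        rw [Finset.sum_congr rfl h6', Finset.sum_const, Finset.card_range, nsmul_eq_mul]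
      have h7 : ∑' k, uM (k + M) = 2 * Ttail b M := by
        have h7' : ∀ k, uM (k + M) = 2 * gaugeMax b (k + M) := fun k => by
          simp only [huMdef]
          rw [if_neg (by omega)]
        rw [tsum_congr h7', tsum_mul_left]
        rfl
      rw [← h5, h6, h7]
    have hTM : Ttail b M ≤ ε₁ * p.a M := hM M le_rfl
    have hsub : ∀ x, (ψ c - ψ c₀).fn x = Ssum d x := by
      intro x
      have h1 : (ψ c - ψ c₀).fn x = Ssum c.1 x - Ssum c₀.1 x := rfl
      rw [h1, ← Ssum_sub x (summable_term hg0 hsg (hcK c) x)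
        (summable_term hg0 hsg (hcK c₀) x)]
    have hA : ∀ x, |(ψ c - ψ c₀).fn x| ≤ (M:ℝ) * δ + 2 * Ttail b M := by
      intro x
      rw [hsub x]
      exact (abs_Ssum_le huM0 huMs hd x).trans htot
    set K' : ℝ := 2 * (M:ℝ) * δ / p.a M + 4 * ε₁ with hK'def
    have hK'0 : 0 ≤ K' := by positivity
    have hK'mem : K' ∈ lipSet p.a (ψ c - ψ c₀).fn := by
      refine ⟨hK'0, fun x y => ?_⟩
      rw [hsub x, hsub y]
      rcases eq_or_ne x y with rfl | hxy
      · simp [dA_self]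
      · rw [dA_eq_find hxy]
        set m := Nat.find (Function.ne_iff.mp hxy) with hm
        have hagree : ∀ i < m, x i = y i := fun i hi => not_not.mp (Nat.find_min _ hi)
        have hbound := abs_Ssum_diff_le huM0 huMs hd hagree
        rcases le_or_gt M m with hMm | hMm
        · have heq : ∑' k, uM (k + m) = 2 * Ttail b m := by
            have heq' : ∀ k, uM (k + m) = 2 * gaugeMax b (k + m) := fun k => by
              simp only [huMdef]
              rw [if_neg (by omega)]
            rw [tsum_congr heq', tsum_mul_left]
            rfl
          have h8 : Ttail b m ≤ ε₁ * p.a m := hM m hMm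
          have hp := (p.pos m).le
          have h9 : 0 ≤ 2 * (M:ℝ) * δ / p.a M := by positivity
          calc |Ssum d x - Ssum d y| ≤ 2 * ∑' k, uM (k + m) := hbound
            _ = 4 * Ttail b m := by rw [heq]; ring
            _ ≤ 4 * (ε₁ * p.a m) := by linarith
            _ ≤ K' * p.a m := by rw [hK'def]; nlinarith [mul_nonneg h9 hp]
        · have h10 : ∑' k, uM (k + m) ≤ ∑' n, uM n := tsum_tail_le huMs huM0 m
          have h11 : p.a M ≤ p.a m := p.anti.antitone hMm.le
          have h12 : 2 * (M:ℝ) * δ = (2 * (M:ℝ) * δ / p.a M) * p.a M := by field_simp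
          have h13 : 0 ≤ 2 * (M:ℝ) * δ / p.a M := by positivity
          have hA1 := mul_le_mul_of_nonneg_left h11 h13
          have hA2 := mul_le_mul_of_nonneg_left h11
            (le_of_lt (by positivity : (0:ℝ) < 4 * ε₁))
          calc |Ssum d x - Ssum d y| ≤ 2 * ∑' k, uM (k + m) := hbound
            _ ≤ 2 * ((M:ℝ) * δ + 2 * Ttail b M) := by linarith
            _ ≤ 2 * (M:ℝ) * δ + 4 * (ε₁ * p.a M) := by linarith
            _ = (2 * (M:ℝ) * δ / p.a M) * p.a M + 4 * ε₁ * p.a M := by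
                rw [← h12]; ring
            _ ≤ (2 * (M:ℝ) * δ / p.a M) * p.a m + 4 * ε₁ * p.a m := by linarith
            _ = K' * p.a m := by rw [hK'def]; ring
    have hnorm : ‖ψ c - ψ c₀‖ ≤ ((M:ℝ) * δ + 2 * Ttail b M) + K' :=
      caNorm_le' p _ hA hK'mem
    have h15 : p.a M ≤ p.a 0 := p.anti.antitone (Nat.zero_le M)
    have hpart1 : (M:ℝ) * δ + 2 * (M:ℝ) * δ / p.a M = δ * Q := by
      rw [hQdef]
      field_simp
    have h17 : ε₁ * (8 * (1 + p.a 0)) = ε := by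
      rw [hε₁def]
      field_simp
    have e1 : 0 ≤ ε₁ * p.a 0 := mul_nonneg hε₁.le ha0.le
    have h18 : 2 * (ε₁ * p.a 0) + 4 * ε₁ ≤ ε / 2 := by
      have e2 : 4 * (ε₁ * p.a 0) + 4 * ε₁ = ε / 2 := by rw [← h17]; ring
      linarith only [e1, e2]
    have h19 : Ttail b M ≤ ε₁ * p.a 0 := by
      have e3 : ε₁ * p.a M ≤ ε₁ * p.a 0 := mul_le_mul_of_nonneg_left h15 hε₁.le
      linarith only [hTM, e3]
    have hfinal : ((M:ℝ) * δ + 2 * Ttail b M) + K' < ε := by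
      have e4 : (M:ℝ) * δ + 2 * (M:ℝ) * δ / p.a M = ε / 4 := by rw [hpart1, hδQ]
      rw [hK'def]
      linarith only [e4, h18, h19, hε]
    exact hnorm.trans_lt hfinal
end

section
/- Let (c_ω)_{ω∈Ω*} be a family of real numbers and set c̄_n = sup_{|ω|=n} |c_ω|. If Σ_n c̄_n < ∞, then for any constant c the Haar series c + Σ_{n=0}^∞ ( Σ_{|ω|=n} c_ω h_ω ) is normally convergent and defines a continuous function f : Ω → ℝ satisfying ‖f‖_∞ ≤ |c| + (1/2) Σ_n c̄_n and var_n(f) ≤ Σ_{k≥n} c̄_k for every n ∈ ℕ. -/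
open Set Filter

/-- `c̄_n = sup_{|ω|=n} |c_ω|`. -/
noncomputable def cbar (c : List Bool → ℝ) (n : ℕ) : ℝ :=
  sSup {r | ∃ w : List Bool, w.length = n ∧ r = |c w|}

/-- The `n`-th variation of `f`. -/
noncomputable def varR (n : ℕ) (f : Omega → ℝ) : ℝ :=
  sSup {r | ∃ x y : Omega, (∀ i, i < n → x i = y i) ∧ r = |f x - f y|}

/-! ### Auxiliary definitions and lemmas -/

/-- The word of the first `n` letters of `x`. -/
noncomputable def pref (x : Omega) (n : ℕ) : List Bool :=
  List.ofFn (fun i : Fin n => x i)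

@[simp] lemma pref_length (x : Omega) (n : ℕ) : (pref x n).length = n := by
  simp [pref]

lemma pref_inj (x : Omega) : Function.Injective (pref x) := by
  intro m n h
  have := congrArg List.length h
  simpa using this

lemma haar_eq_zero {w : List Bool} {x : Omega} (h : w ≠ pref x w.length) :
    haar w x = 0 := by
  rw [haar, if_neg]
  intro hall
  apply h
  apply List.ext_get (by simp)
  intro i h1 h2
  have := hall ⟨i, h1⟩
  simp [pref, List.get_ofFn]
  exact this.symm

lemma haar_pref (x : Omega) (n : ℕ) :
    haar (pref x n) x = if x n = false then 1 / 2 else -(1 / 2) := by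
  rw [haar, if_pos]
  · rw [pref_length]
  · intro i
    simp [pref, List.get_ofFn]
    exact (List.getElem_ofFn i.2).symm

lemma abs_haar_pref (x : Omega) (n : ℕ) : |haar (pref x n) x| = 1 / 2 := by
  rw [haar_pref]; split_ifs <;> norm_num

lemma abs_le_cbar (c : List Bool → ℝ) {n : ℕ} {w : List Bool} (hw : w.length = n) :
    |c w| ≤ cbar c n := by
  apply le_csSup
  · have hfin : {r | ∃ w : List Bool, w.length = n ∧ r = |c w|}.Finite := by
      have : {r | ∃ w : List Bool, w.length = n ∧ r = |c w|}
          = (fun w => |c w|) '' {w : List Bool | w.length = n} := by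
        ext r
        simp [Set.image, eq_comm]
      rw [this]
      exact (List.finite_length_eq Bool n).image _
    exact hfin.bddAbove
  · exact ⟨w, hw, rfl⟩

lemma cbar_nonneg (c : List Bool → ℝ) (n : ℕ) : 0 ≤ cbar c n :=
  le_trans (abs_nonneg _) (abs_le_cbar c (w := List.replicate n false) (by simp))

/-- **Convergence of Haar series.**  Let `(c_ω)_{ω ∈ Ω*}` be a family of reals and put
`c̄_n = sup_{|ω|=n} |c_ω|`.  If `Σ_n c̄_n < ∞` then, for any constant `c`, the Haar
series `c + Σ_n (Σ_{|ω|=n} c_ω h_ω)` is normally convergent and defines a continuous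
function `f : Ω → ℝ` with `‖f‖_∞ ≤ |c| + (1/2) Σ_n c̄_n` and
`var_n(f) ≤ Σ_{k ≥ n} c̄_k` for every `n`. -/
theorem haar_series_convergence (c : List Bool → ℝ) (κ : ℝ)
    (hsum : Summable (cbar c)) :
    ∃ f : Omega → ℝ, Continuous f ∧
      (∀ x, HasSum (fun w : List Bool => c w * haar w x) (f x - κ)) ∧
      Summable (fun n : ℕ =>
        ⨆ x : Omega, |∑' w : {w : List Bool // w.length = n}, c w.1 * haar w.1 x|) ∧
      (⨆ x, |f x|) ≤ |κ| + (1 / 2) * ∑' n, cbar c n ∧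
      ∀ n : ℕ, varR n f ≤ ∑' k : ℕ, cbar c (n + k) := by
  classical
  set g : ℕ → Omega → ℝ := fun n x => c (pref x n) * haar (pref x n) x with hg
  -- pointwise bound
  have hb : ∀ n x, |g n x| ≤ cbar c n * (1 / 2) := by
    intro n x
    rw [hg]
    simp only
    rw [abs_mul, abs_haar_pref]
    exact mul_le_mul_of_nonneg_right (abs_le_cbar c (pref_length x n)) (by norm_num)
  have hsum2 : Summable (fun n => cbar c n * (1 / 2)) := hsum.mul_right _
  have hgs : ∀ x, Summable (fun n => g n x) := by
    intro x
    exact Summable.of_norm_bounded hsum2 (fun n => by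
      rw [Real.norm_eq_abs]; exact hb n x)
  -- each g n is continuous
  have hgc : ∀ n, Continuous (g n) := by
    intro n
    have hres : Continuous (fun x : Omega => (fun i : Fin (n + 1) => x i)) :=
      continuous_pi fun i => continuous_apply _
    have heq : g n = (fun v : Fin (n + 1) → Bool =>
        c (List.ofFn (fun i : Fin n => v i.castSucc)) *
          (if v (Fin.last n) = false then 1 / 2 else -(1 / 2))) ∘
        (fun x : Omega => (fun i : Fin (n + 1) => x i)) := by
      funext x
      simp only [Function.comp_apply, hg]
      rw [haar_pref]
      rfl
    rw [heq]
    exact Continuous.comp continuous_of_discreteTopology hres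
  refine ⟨fun x => κ + ∑' m, g m x, ?_, ?_, ?_, ?_, ?_⟩
  · -- continuity
    apply Continuous.add continuous_const
    exact continuous_tsum hgc hsum2 (fun n x => by rw [Real.norm_eq_abs]; exact hb n x)
  · -- HasSum
    intro x
    have h0 : ∀ w ∉ Set.range (pref x), c w * haar w x = 0 := by
      intro w hw
      have hne : w ≠ pref x w.length := fun h => hw ⟨w.length, h.symm⟩
      rw [haar_eq_zero hne, mul_zero]
    have h1 : HasSum (fun n => g n x) (∑' m, g m x) := (hgs x).hasSum
    have h2 : HasSum (fun w : List Bool => c w * haar w x) (∑' m, g m x) :=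
      ((pref_inj x).hasSum_iff h0).mp h1
    simpa using h2
  · -- normal convergence
    have htsum_n : ∀ n x,
        (∑' w : {w : List Bool // w.length = n}, c w.1 * haar w.1 x) = g n x := by
      intro n x
      rw [tsum_eq_single (⟨pref x n, pref_length x n⟩ : {w : List Bool // w.length = n})]
      · intro b hb'
        have hne : b.1 ≠ pref x b.1.length := by
          intro h
          apply hb'
          apply Subtype.ext
          rw [h, b.2]
        rw [haar_eq_zero hne, mul_zero]
    apply Summable.of_nonneg_of_le (fun n => Real.iSup_nonneg fun x => abs_nonneg _)
      (fun n => Real.iSup_le (fun x => by rw [htsum_n]; exact hb n x)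
        (mul_nonneg (cbar_nonneg c n) (by norm_num)))
      hsum2
  · -- sup norm bound
    apply Real.iSup_le _ (add_nonneg (abs_nonneg κ)
      (mul_nonneg (by norm_num) (tsum_nonneg fun m => cbar_nonneg c m)))
    intro x
    have habs : Summable (fun n => |g n x|) := (hgs x).abs
    have h1 : |∑' m, g m x| ≤ ∑' m, |g m x| := by
      have := norm_tsum_le_tsum_norm (f := fun n => g n x)
        (by simpa [Real.norm_eq_abs] using habs)
      simpa [Real.norm_eq_abs] using this
    have h2 : (∑' m, |g m x|) ≤ ∑' m, cbar c m * (1 / 2) :=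
      Summable.tsum_le_tsum (fun m => hb m x) habs hsum2
    have h3 : (∑' m, cbar c m * (1 / 2)) = (1 / 2) * ∑' m, cbar c m := by
      rw [tsum_mul_right, mul_comm]
    calc |κ + ∑' m, g m x| ≤ |κ| + |∑' m, g m x| := abs_add_le _ _
      _ ≤ |κ| + (1 / 2) * ∑' m, cbar c m := by
          rw [← h3]; exact add_le_add le_rfl (h1.trans h2)
  · -- variation bound
    intro n
    apply Real.sSup_le _ (tsum_nonneg fun k => cbar_nonneg c _)
    rintro r ⟨x, y, hxy, rfl⟩
    set d : ℕ → ℝ := fun m => g m x - g m y with hd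
    have hdsum : Summable d := (hgs x).sub (hgs y)
    have hdz : ∀ m, m < n → d m = 0 := by
      intro m hm
      have hp : pref x m = pref y m := by
        unfold pref
        congr 1
        funext i
        exact hxy i (lt_of_lt_of_le i.2 hm.le)
      have hxm : x m = y m := hxy m hm
      simp only [hd, hg, sub_eq_zero, hp, haar_pref, hxm]
    have hsupp : Function.support d ⊆ Set.range (fun k : ℕ => n + k) := by
      intro m hm
      by_contra h
      have hmn : m < n := by
        by_contra h'
        exact h ⟨m - n, by show n + (m - n) = m; omega⟩
      exact hm (hdz m hmn)
    have hshift : (∑' k, d (n + k)) = ∑' m, d m :=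
      Function.Injective.tsum_eq (fun a b h => by omega) hsupp
    have hdb : ∀ k, |d (n + k)| ≤ cbar c (n + k) := by
      intro k
      have h1 := hb (n + k) x
      have h2 := hb (n + k) y
      have := abs_sub (g (n + k) x) (g (n + k) y)
      simp only [hd]
      calc |g (n + k) x - g (n + k) y| ≤ |g (n + k) x| + |g (n + k) y| := abs_sub _ _
        _ ≤ cbar c (n + k) * (1 / 2) + cbar c (n + k) * (1 / 2) := add_le_add h1 h2
        _ = cbar c (n + k) := by ring
    have hcs : Summable fun k => cbar c (n + k) := by
      have := (summable_nat_add_iff n).2 hsum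
      simpa [add_comm] using this
    have hds : Summable fun k => d (n + k) :=
      Summable.of_norm_bounded hcs (fun k => by rw [Real.norm_eq_abs]; exact hdb k)
    have hfd : (κ + ∑' m, g m x) - (κ + ∑' m, g m y) = ∑' m, d m := by
      rw [Summable.tsum_sub (hgs x) (hgs y)]
      ring
    calc |(κ + ∑' m, g m x) - (κ + ∑' m, g m y)| = |∑' k, d (n + k)| := by
          rw [hfd, ← hshift]
      _ ≤ ∑' k, |d (n + k)| := by
          have := norm_tsum_le_tsum_norm (f := fun k => d (n + k))
            (by simpa [Real.norm_eq_abs] using hds.abs)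
          simpa [Real.norm_eq_abs] using this
      _ ≤ ∑' k, cbar c (n + k) := Summable.tsum_le_tsum hdb hds.abs hcs
end

section
/- Let G be a finite directed graph. Every circulation on G is a convex combination of circulations supported on cycles of G. -/
open Set

/-- A circulation on the directed graph with node set `V` and arc set `A ⊆ V × V`:
nonnegative weights on arcs (zero outside `A`), total weight `1`, satisfying
Kirchhoff's current law at every node. -/
def IsCirculation {V : Type} [Fintype V] [DecidableEq V] (A : Finset (V × V))
    (c : V × V → ℝ) : Prop :=
  (∀ e, 0 ≤ c e) ∧ (∀ e, e ∉ A → c e = 0) ∧ (∑ e : V × V, c e = 1) ∧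
    ∀ v : V, (∑ u : V, c (u, v)) = ∑ u : V, c (v, u)

/-- `l` is a cycle of the graph `(V, A)`: a nonempty list of pairwise distinct nodes all
of whose consecutive (cyclically) pairs are arcs of `A`. -/
def IsCycle {V : Type} [Fintype V] [DecidableEq V] (A : Finset (V × V))
    (l : List V) : Prop :=
  l ≠ [] ∧ l.Nodup ∧ ∀ e ∈ l.zip (l.rotate 1), e ∈ A

/-- The circulation supported on a cycle: equal weight `1/ℓ` on each arc of the cycle. -/
noncomputable def cycleCirculation {V : Type} [DecidableEq V] (l : List V) :
    V × V → ℝ :=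
  fun e => if e ∈ l.zip (l.rotate 1) then (l.length : ℝ)⁻¹ else 0

section CirculationAux

lemma succ_mod_inj {n a b : ℕ} (ha : a < n) (hb : b < n) (h : (a+1) % n = (b+1) % n) :
    a = b := by
  rcases Nat.lt_or_ge (a+1) n with h1 | h1 <;> rcases Nat.lt_or_ge (b+1) n with h2 | h2
  · rw [Nat.mod_eq_of_lt h1, Nat.mod_eq_of_lt h2] at h; omega
  · have hb1 : b + 1 = n := by omega
    rw [Nat.mod_eq_of_lt h1, hb1, Nat.mod_self] at h; omega
  · have ha1 : a + 1 = n := by omega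
    rw [ha1, Nat.mod_self, Nat.mod_eq_of_lt h2] at h; omega
  · omega

lemma mod_succ_mod (x n : ℕ) : (x % n + 1) % n = (x + 1) % n := by
  conv_rhs => rw [Nat.add_mod]
  rw [Nat.add_mod (x % n) 1 n, Nat.mod_mod_of_dvd _ dvd_rfl]

variable {V : Type} [DecidableEq V]

/-- successor index on a nonempty list, cyclically -/
def succIdx {l : List V} (hl : l ≠ []) (k : Fin l.length) : Fin l.length :=
  ⟨((k : ℕ) + 1) % l.length, Nat.mod_lt _ (List.length_pos_iff.mpr hl)⟩

lemma succIdx_inj {l : List V} (hl : l ≠ []) {a b : Fin l.length}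
    (h : succIdx hl a = succIdx hl b) : a = b := by
  ext
  exact succ_mod_inj a.isLt b.isLt (congrArg Fin.val h)

lemma succIdx_surj {l : List V} (hl : l ≠ []) (j : Fin l.length) :
    ∃ k, succIdx hl k = j := by
  have hpos : 0 < l.length := List.length_pos_iff.mpr hl
  refine ⟨⟨((j : ℕ) + (l.length - 1)) % l.length, Nat.mod_lt _ hpos⟩, ?_⟩
  ext
  show (((j : ℕ) + (l.length - 1)) % l.length + 1) % l.length = j
  rw [mod_succ_mod]
  have : (j : ℕ) + (l.length - 1) + 1 = (j : ℕ) + l.length := by omega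
  rw [this, Nat.add_mod_right, Nat.mod_eq_of_lt j.isLt]

lemma length_zip_rotate (l : List V) : (l.zip (l.rotate 1)).length = l.length := by
  simp [List.length_zip, List.length_rotate]

lemma mem_zip_rotate {l : List V} (hl : l ≠ []) {e : V × V} :
    e ∈ l.zip (l.rotate 1) ↔
      ∃ k : Fin l.length, e = (l.get k, l.get (succIdx hl k)) := by
  rw [List.mem_iff_get]
  have hrot : ∀ (k : ℕ) (hk : k < l.length),
      (l.rotate 1).get ⟨k, by simpa [List.length_rotate] using hk⟩
        = l.get (succIdx hl ⟨k, hk⟩) := by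
    intro k hk
    rw [List.get_rotate]
    rfl
  constructor
  · rintro ⟨n, hn⟩
    have hn1 : (n : ℕ) < l.length := by
      have h := n.isLt
      simp only [length_zip_rotate] at h
      exact h
    refine ⟨⟨n, hn1⟩, ?_⟩
    rw [List.get_eq_getElem, List.getElem_zip] at hn
    rw [← hn, ← hrot (n : ℕ) hn1]; rfl
  · rintro ⟨k, hk⟩
    refine ⟨⟨(k : ℕ), by rw [length_zip_rotate]; exact k.isLt⟩, ?_⟩
    rw [List.get_eq_getElem, List.getElem_zip, hk]
    congr 1
    · exact hrot (k : ℕ) k.isLt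

variable [Fintype V]

lemma sum_in (l : List V) (hl : l ≠ []) (hnd : l.Nodup) (v : V) :
    ∑ u : V, cycleCirculation l (u, v) = if v ∈ l then (l.length : ℝ)⁻¹ else 0 := by
  unfold cycleCirculation
  by_cases hv : v ∈ l
  · obtain ⟨j, hj⟩ := List.mem_iff_get.mp hv
    obtain ⟨k0, hk0⟩ := succIdx_surj hl j
    have key : ∀ u : V, ((u, v) ∈ l.zip (l.rotate 1)) ↔ u = l.get k0 := by
      intro u
      rw [mem_zip_rotate hl]
      constructor
      · rintro ⟨k, hk⟩
        have h1 : u = l.get k := congrArg Prod.fst hk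
        have h2 : v = l.get (succIdx hl k) := congrArg Prod.snd hk
        have : succIdx hl k = j := hnd.get_inj_iff.mp (by rw [← h2, hj])
        have : k = k0 := succIdx_inj hl (by rw [this, hk0])
        rw [h1, this]
      · intro hu
        exact ⟨k0, by rw [hu, hk0, hj]⟩
    rw [if_pos hv]
    calc ∑ u : V, (if (u, v) ∈ l.zip (l.rotate 1) then (l.length : ℝ)⁻¹ else 0)
        = ∑ u : V, (if u = l.get k0 then (l.length : ℝ)⁻¹ else 0) := by
          refine Finset.sum_congr rfl fun u _ => ?_
          rw [if_congr (key u) rfl rfl]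
      _ = (l.length : ℝ)⁻¹ := by rw [Finset.sum_ite_eq' Finset.univ (l.get k0) (fun _ => (l.length : ℝ)⁻¹), if_pos (Finset.mem_univ _)]
  · rw [if_neg hv]
    refine Finset.sum_eq_zero fun u _ => ?_
    rw [if_neg]
    intro hmem
    obtain ⟨k, hk⟩ := (mem_zip_rotate hl).mp hmem
    have h2 : v = l.get (succIdx hl k) := congrArg Prod.snd hk
    exact hv (by rw [h2]; exact List.get_mem _ _)

lemma sum_out (l : List V) (hl : l ≠ []) (hnd : l.Nodup) (v : V) :
    ∑ u : V, cycleCirculation l (v, u) = if v ∈ l then (l.length : ℝ)⁻¹ else 0 := by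
  unfold cycleCirculation
  by_cases hv : v ∈ l
  · obtain ⟨j, hj⟩ := List.mem_iff_get.mp hv
    have key : ∀ u : V, ((v, u) ∈ l.zip (l.rotate 1)) ↔ u = l.get (succIdx hl j) := by
      intro u
      rw [mem_zip_rotate hl]
      constructor
      · rintro ⟨k, hk⟩
        have h1 : v = l.get k := congrArg Prod.fst hk
        have h2 : u = l.get (succIdx hl k) := congrArg Prod.snd hk
        have : k = j := hnd.get_inj_iff.mp (by rw [← h1, hj])
        rw [h2, this]
      · intro hu
        exact ⟨j, by rw [hu, hj]⟩
    rw [if_pos hv]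
    calc ∑ u : V, (if (v, u) ∈ l.zip (l.rotate 1) then (l.length : ℝ)⁻¹ else 0)
        = ∑ u : V, (if u = l.get (succIdx hl j) then (l.length : ℝ)⁻¹ else 0) := by
          refine Finset.sum_congr rfl fun u _ => ?_
          rw [if_congr (key u) rfl rfl]
      _ = (l.length : ℝ)⁻¹ := by rw [Finset.sum_ite_eq' Finset.univ _ (fun _ => (l.length : ℝ)⁻¹), if_pos (Finset.mem_univ _)]
  · rw [if_neg hv]
    refine Finset.sum_eq_zero fun u _ => ?_
    rw [if_neg]
    intro hmem
    obtain ⟨k, hk⟩ := (mem_zip_rotate hl).mp hmem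
    have h1 : v = l.get k := congrArg Prod.fst hk
    exact hv (by rw [h1]; exact List.get_mem _ _)

lemma zip_rotate_nodup (l : List V) (hnd : l.Nodup) : (l.zip (l.rotate 1)).Nodup := by
  have h : List.map Prod.fst (l.zip (l.rotate 1)) = l := List.map_fst_zip (by simp)
  have : (List.map Prod.fst (l.zip (l.rotate 1))).Nodup := by rw [h]; exact hnd
  exact List.Nodup.of_map _ this

lemma sum_total (l : List V) (hl : l ≠ []) (hnd : l.Nodup) :
    ∑ e : V × V, cycleCirculation l e = 1 := by
  unfold cycleCirculation
  rw [Finset.sum_ite, Finset.sum_const, Finset.sum_const_zero, add_zero]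
  have hfin : Finset.univ.filter (· ∈ l.zip (l.rotate 1)) = (l.zip (l.rotate 1)).toFinset := by
    ext e; simp
  rw [hfin, List.toFinset_card_of_nodup (zip_rotate_nodup l hnd), length_zip_rotate]
  rw [nsmul_eq_mul]
  have h0 : (l.length : ℝ) ≠ 0 := by
    have := List.length_pos_iff.mpr hl; positivity
  field_simp

lemma exists_cycle_pos (c : V × V → ℝ) (hpos : ∀ e, 0 ≤ c e)
    (hcons : ∀ v : V, (∑ u : V, c (u, v)) = ∑ u : V, c (v, u)) {e0 : V × V} (h0 : 0 < c e0) :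
    ∃ l : List V, l ≠ [] ∧ l.Nodup ∧ ∀ e ∈ l.zip (l.rotate 1), 0 < c e := by
  classical
  have key : ∀ v u : V, 0 < c (u, v) → ∃ w, 0 < c (v, w) := by
    intro v u h
    by_contra h'
    push_neg at h'
    have h1 : (∑ w : V, c (v, w)) ≤ 0 := Finset.sum_nonpos fun w _ => h' w
    have h2 : c (u, v) ≤ ∑ w : V, c (w, v) :=
      Finset.single_le_sum (fun w _ => hpos (w, v)) (Finset.mem_univ u)
    rw [hcons v] at h2
    linarith
  let f : ℕ → V := fun n => Nat.rec (motive := fun _ => V) e0.2 (fun _ v => if h : ∃ w, 0 < c (v, w) then h.choose else v) n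
  have hf : ∀ n, f (n + 1) = (if h : ∃ w, 0 < c (f n, w) then h.choose else f n) := fun n => rfl
  have step : ∀ n : ℕ, (∃ u, 0 < c (u, f n)) → 0 < c (f n, f (n + 1)) := by
    rintro n ⟨u, hu⟩
    have hex : ∃ w, 0 < c (f n, w) := key (f n) u hu
    rw [hf n, dif_pos hex]
    exact hex.choose_spec
  have main : ∀ n : ℕ, 0 < c (f n, f (n + 1)) := by
    intro n
    induction n with
    | zero => exact step 0 ⟨e0.1, by exact h0⟩
    | succ n ih => exact step (n + 1) ⟨f n, ih⟩
  obtain ⟨a, b, hab, hfab⟩ := Finite.exists_ne_map_eq_of_infinite f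
  have hP : ∃ j : ℕ, ∃ i, i < j ∧ f i = f j := by
    rcases lt_or_gt_of_ne hab with h | h
    · exact ⟨b, a, h, hfab⟩
    · exact ⟨a, b, h, hfab.symm⟩
  set j0 := Nat.find hP with hj0
  obtain ⟨i0, hi0lt, hfi0⟩ := Nat.find_spec hP
  set n := j0 - i0 with hn
  have hnpos : 0 < n := by omega
  set l : List V := (List.range n).map (fun k => f (i0 + k)) with hldef
  have hlen : l.length = n := by simp [hldef]
  have hlne : l ≠ [] := by
    intro h
    rw [h] at hlen
    simp at hlen
    omega
  have hget : ∀ m : Fin l.length, l.get m = f (i0 + (m : ℕ)) := by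
    intro m
    rcases m with ⟨m, hm⟩
    simp [hldef]
  have hnd : l.Nodup := by
    refine List.Nodup.map_on ?_ (List.nodup_range (n := n))
    intro x hx y hy hxy
    simp only [List.mem_range] at hx hy
    by_contra hne
    rcases lt_or_gt_of_ne hne with h | h
    · exact Nat.find_min hP (show i0 + y < j0 by omega) ⟨i0 + x, by omega, hxy⟩
    · exact Nat.find_min hP (show i0 + x < j0 by omega) ⟨i0 + y, by omega, hxy.symm⟩
  refine ⟨l, hlne, hnd, ?_⟩
  intro e he
  obtain ⟨k, hk⟩ := (mem_zip_rotate hlne).mp he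
  have hk1 : (k : ℕ) < n := by rw [← hlen]; exact k.isLt
  rw [hk, hget k, hget (succIdx hlne k)]
  have hsucc : (succIdx hlne k : ℕ) = ((k : ℕ) + 1) % l.length := rfl
  by_cases hcase : (k : ℕ) + 1 < n
  · have hv : i0 + (succIdx hlne k : ℕ) = (i0 + (k : ℕ)) + 1 := by
      rw [hsucc, Nat.mod_eq_of_lt (show (k : ℕ) + 1 < l.length by omega)]
      omega
    rw [hv]
    exact main (i0 + (k : ℕ))
  · have hkn : (k : ℕ) + 1 = n := by omega
    have hv : i0 + (succIdx hlne k : ℕ) = i0 := by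
      rw [hsucc, show (k : ℕ) + 1 = l.length by omega, Nat.mod_self]
      omega
    rw [hv]
    have h2 : f i0 = f (i0 + (k : ℕ) + 1) := by
      rw [show i0 + (k : ℕ) + 1 = j0 by omega]
      exact hfi0
    rw [h2]
    exact main (i0 + (k : ℕ))

lemma circulation_aux (A : Finset (V × V)) :
    ∀ (n : ℕ) (c : V × V → ℝ), IsCirculation A c →
      (Finset.univ.filter (fun e => c e ≠ 0)).card ≤ n →
      c ∈ convexHull ℝ {d : V × V → ℝ | ∃ l : List V, IsCycle A l ∧ d = cycleCirculation l} := by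
  intro n
  induction n with
  | zero =>
    intro c hc hcard
    exfalso
    obtain ⟨hpos, hA, hsum, hcons⟩ := hc
    have hz : ∀ e : V × V, c e = 0 := by
      intro e
      by_contra hne
      have : e ∈ Finset.univ.filter (fun e => c e ≠ 0) := by simp [hne]
      have := Finset.card_pos.mpr ⟨e, this⟩
      omega
    rw [Finset.sum_eq_zero (fun e _ => hz e)] at hsum
    norm_num at hsum
  | succ n ih =>
    intro c hc hcard
    obtain ⟨hpos, hA, hsum, hcons⟩ := hc
    -- a positive arc exists
    have hex : ∃ e0, 0 < c e0 := by
      by_contra h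
      push_neg at h
      rw [Finset.sum_eq_zero (fun e _ => le_antisymm (h e) (hpos e))] at hsum
      norm_num at hsum
    obtain ⟨e0, he0⟩ := hex
    obtain ⟨l, hlne, hnd, harcs⟩ := exists_cycle_pos c hpos hcons he0
    have hcycle : IsCycle A l := by
      refine ⟨hlne, hnd, fun e he => ?_⟩
      by_contra hne
      exact (harcs e he).ne' (hA e hne)
    set Z := l.zip (l.rotate 1) with hZ
    have hlpos : 0 < l.length := List.length_pos_iff.mpr hlne
    have hZne : Z.toFinset.Nonempty := by
      refine ⟨Z.get ⟨0, ?_⟩, ?_⟩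
      · rw [length_zip_rotate]; exact hlpos
      · rw [List.mem_toFinset]; exact List.get_mem _ _
    obtain ⟨estar, hesmem, hesmin⟩ := Finset.exists_min_image Z.toFinset c hZne
    have hesZ : estar ∈ Z := List.mem_toFinset.mp hesmem
    set m := c estar with hm
    have hmpos : 0 < m := harcs estar hesZ
    set t : ℝ := (l.length : ℝ) * m with ht
    have hlR : (0 : ℝ) < (l.length : ℝ) := by exact_mod_cast hlpos
    have htpos : 0 < t := mul_pos hlR hmpos
    have hZcard : Z.toFinset.card = l.length := by
      rw [List.toFinset_card_of_nodup (zip_rotate_nodup l hnd), length_zip_rotate]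
    have ht1 : t ≤ 1 := by
      have h1 : Z.toFinset.card • m ≤ ∑ e ∈ Z.toFinset, c e :=
        Finset.card_nsmul_le_sum _ _ _ (fun e he => hesmin e he)
      have h2 : ∑ e ∈ Z.toFinset, c e ≤ ∑ e : V × V, c e :=
        Finset.sum_le_sum_of_subset_of_nonneg (Finset.subset_univ _) (fun e _ _ => hpos e)
      rw [hZcard, nsmul_eq_mul] at h1
      rw [hsum] at h2
      calc t = (l.length : ℝ) * m := ht
        _ ≤ ∑ e ∈ Z.toFinset, c e := h1
        _ ≤ 1 := h2
    set cyc := cycleCirculation l with hcyc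
    have hcycZ : ∀ e ∈ Z, cyc e = (l.length : ℝ)⁻¹ := fun e he => if_pos he
    have hcycnZ : ∀ e, e ∉ Z → cyc e = 0 := fun e he => if_neg he
    have hcycsum : ∑ e : V × V, cyc e = 1 := sum_total l hlne hnd
    have hcyccons : ∀ v : V, (∑ u : V, cyc (u, v)) = ∑ u : V, cyc (v, u) := by
      intro v
      rw [sum_in l hlne hnd v, sum_out l hlne hnd v]
    have hcycnn : ∀ e, 0 ≤ cyc e := by
      intro e
      by_cases he : e ∈ Z
      · rw [hcycZ e he]; positivity
      · rw [hcycnZ e he]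
    have hcycmem : cyc ∈ {d : V × V → ℝ | ∃ l : List V, IsCycle A l ∧ d = cycleCirculation l} :=
      ⟨l, hcycle, rfl⟩
    set c' : V × V → ℝ := fun e => c e - t * cyc e with hc'
    have htinv : t * (l.length : ℝ)⁻¹ = m := by
      rw [ht]; field_simp
    have hc'nn : ∀ e, 0 ≤ c' e := by
      intro e
      by_cases he : e ∈ Z
      · simp only [hc']
        rw [hcycZ e he, htinv]
        have := hesmin e (List.mem_toFinset.mpr he)
        linarith
      · simp only [hc']
        rw [hcycnZ e he]
        have := hpos e
        linarith
    have hc'sum : ∑ e : V × V, c' e = 1 - t := by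
      simp only [hc']
      rw [Finset.sum_sub_distrib, ← Finset.mul_sum, hsum, hcycsum, mul_one]
    have hc'star : c' estar = 0 := by
      simp only [hc']
      rw [hcycZ estar hesZ, htinv, ← hm]
      ring
    rcases eq_or_lt_of_le ht1 with heq | hlt
    · -- t = 1 : c is exactly the cycle circulation
      have hall : ∀ e : V × V, c' e = 0 := by
        have h0 : ∑ e : V × V, c' e = 0 := by rw [hc'sum, ← heq]; ring
        intro e
        exact (Finset.sum_eq_zero_iff_of_nonneg (fun e _ => hc'nn e)).mp h0 e (Finset.mem_univ e)
      have : c = cyc := by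
        funext e
        have := hall e
        simp only [hc'] at this
        rw [heq] at this
        linarith
      rw [this]
      exact subset_convexHull ℝ _ hcycmem
    · -- t < 1 : peel off the cycle and recurse
      have h1t : 0 < 1 - t := by linarith
      set c'' : V × V → ℝ := fun e => (1 - t)⁻¹ * c' e with hc''
      have hc''circ : IsCirculation A c'' := by
        refine ⟨fun e => mul_nonneg (by positivity) (hc'nn e), ?_, ?_, ?_⟩
        · intro e heA
          have hcyc0 : cyc e = 0 := by
            by_contra hne
            have heZ : e ∈ Z := by
              by_contra h
              exact hne (hcycnZ e h)
            exact (harcs e heZ).ne' (hA e heA)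
          simp only [hc'', hc']
          rw [hA e heA, hcyc0]
          ring
        · simp only [hc'']
          rw [← Finset.mul_sum, hc'sum]
          field_simp
        · intro v
          simp only [hc'', hc']
          rw [← Finset.mul_sum, ← Finset.mul_sum, Finset.sum_sub_distrib,
            Finset.sum_sub_distrib, ← Finset.mul_sum, ← Finset.mul_sum (f := fun u => cyc (v, u)),
            hcons v, hcyccons v]
      have hsubset : Finset.univ.filter (fun e => c'' e ≠ 0) ⊂
          Finset.univ.filter (fun e => c e ≠ 0) := by
        constructor
        · intro e he
          simp only [Finset.mem_filter, Finset.mem_univ, true_and] at he ⊢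
          intro hce
          apply he
          have hcyc0 : cyc e = 0 := by
            by_contra hne
            have heZ : e ∈ Z := by
              by_contra h
              exact hne (hcycnZ e h)
            exact (harcs e heZ).ne' hce
          simp only [hc'', hc']
          rw [hce, hcyc0]
          ring
        · intro hsub
          have h1 : estar ∈ Finset.univ.filter (fun e => c e ≠ 0) := by
            simp only [Finset.mem_filter, Finset.mem_univ, true_and]
            exact hmpos.ne'
          have h2 := hsub h1
          simp only [Finset.mem_filter, Finset.mem_univ, true_and] at h2
          apply h2
          simp only [hc'']
          rw [hc'star]
          ring
      have hcard'' : (Finset.univ.filter (fun e => c'' e ≠ 0)).card ≤ n := by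
        have := Finset.card_lt_card hsubset
        omega
      have hc''mem := ih c'' hc''circ hcard''
      have hdecomp : c = t • cyc + (1 - t) • c'' := by
        funext e
        simp only [Pi.add_apply, Pi.smul_apply, smul_eq_mul, hc'', hc']
        field_simp
        ring
      rw [hdecomp]
      exact (convex_convexHull ℝ _) (subset_convexHull ℝ _ hcycmem) hc''mem htpos.le h1t.le
        (by ring)

end CirculationAux

/-- **Every circulation is a convex combination of circulations supported on cycles.** -/
theorem circulation_mem_convexHull_cycles (V : Type) [Fintype V] [DecidableEq V]
    (A : Finset (V × V)) (c : V × V → ℝ) (hc : IsCirculation A c) :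
    c ∈ convexHull ℝ {d : V × V → ℝ | ∃ l : List V, IsCycle A l ∧ d = cycleCirculation l} := by
  exact circulation_aux A (Finset.univ.filter (fun e => c e ≠ 0)).card c hc le_rfl
end

section
/- For every integer n ≥ 1, the rotation set R_n = π_n(M_σ) ⊆ ℝ^{2^n} equals (under the natural identification of coordinates indexed by level-n cylinders with arcs of G_n) the circulation polytope of the de Bruijn graph G_n. Moreover R_n has the injectivity property: the restriction of π_n to the set C_n is a bijection onto the set of vertices of R_n. -/
open Filter Set MeasureTheory
open scoped ENNReal

/-- The cylinder determined by a word of length `n` (as a function `Fin n → Bool`). -/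
def cylF {n : ℕ} (w : Fin n → Bool) : Set Omega := {x | ∀ i : Fin n, x i = w i}

/-- The cylinder determined by a finite word (as a list). -/
def cylL (w : List Bool) : Set Omega := {x | ∀ i : Fin w.length, x (i : ℕ) = w.get i}

/-- A shift-invariant Borel probability measure on `Ω`. -/
def InvariantProb (μ : Measure Omega) : Prop :=
  IsProbabilityMeasure μ ∧ ∀ s : Set Omega, MeasurableSet s → μ (shift ⁻¹' s) = μ s

/-- `μ` is a maximizing measure for `f`. -/
def IsMaxMeasure (f : Omega → ℝ) (μ : Measure Omega) : Prop :=
  InvariantProb μ ∧ ∀ ν : Measure Omega, InvariantProb ν → ∫ x, f x ∂ν ≤ ∫ x, f x ∂μ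

/-- The uniform measure on the orbit segment `x, σx, …, σ^{p-1}x`. -/
noncomputable def orbitMeasure (x : Omega) (p : ℕ) : Measure Omega :=
  (p : ℝ≥0∞)⁻¹ • ∑ j ∈ Finset.range p, MeasureTheory.Measure.dirac (shift^[j] x)

/-- A periodic measure: an invariant measure supported on a periodic orbit. -/
def IsPeriodicMeasure (μ : Measure Omega) : Prop :=
  ∃ (x : Omega) (p : ℕ), 0 < p ∧ shift^[p] x = x ∧ μ = orbitMeasure x p

/-- The period of (the orbit supporting) a periodic measure. -/
noncomputable def perM (μ : Measure Omega) : ℕ :=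
  sInf {p | 0 < p ∧ ∃ x, shift^[p] x = x ∧ μ = orbitMeasure x p}

/-- The (topological) support of a measure. -/
def msupp (μ : Measure Omega) : Set Omega :=
  {x | ∀ U : Set Omega, IsOpen U → x ∈ U → 0 < μ U}

/-- `B_{μ,k}`: the union of all cylinders of level `k` meeting the support of `μ`. -/
def Bbasin (μ : Measure Omega) (k : ℕ) : Set Omega :=
  {x | ∃ y ∈ msupp μ, ∀ i, i < k → x i = y i}

/-- Membership in `𝒞_n`: periodic measures whose `G_n`-itinerary is a cycle, i.e. each
cylinder of level `n-1` contains at most one point of the support. -/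
def MemCn (n : ℕ) (μ : Measure Omega) : Prop :=
  IsPeriodicMeasure μ ∧
    ∀ x ∈ msupp μ, ∀ y ∈ msupp μ, (∀ k, k + 1 < n → x k = y k) → x = y

/-- The projection `π_n : M(Ω) → ℝ^{2^n}`, `μ ↦ (μ[ω])_{|ω|=n}`. -/
noncomputable def piProj (n : ℕ) (μ : MeasureTheory.Measure Omega) : (Fin n → Bool) → ℝ :=
  fun w => (μ (cylF w)).toReal

/-- The rotation set `R_n = π_n(M_σ)`. -/
def rotSet (n : ℕ) : Set ((Fin n → Bool) → ℝ) :=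
  {c | ∃ μ : MeasureTheory.Measure Omega, InvariantProb μ ∧ c = piProj n μ}


namespace RotAux
open scoped Classical


lemma measurable_shift : Measurable shift :=
  measurable_pi_iff.mpr fun n => measurable_pi_apply (n + 1)

lemma cylF_eq_iInter {n : ℕ} (w : Fin n → Bool) :
    cylF w = ⋂ i : Fin n, (fun x : Omega => x (i : ℕ)) ⁻¹' {w i} := by
  ext x; simp [cylF]

lemma measurableSet_cylF {n : ℕ} (w : Fin n → Bool) : MeasurableSet (cylF w) := by
  rw [cylF_eq_iInter]
  exact MeasurableSet.iInter fun i => (measurable_pi_apply _) (measurableSet_singleton _)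

lemma isOpen_cylF {n : ℕ} (w : Fin n → Bool) : IsOpen (cylF w) := by
  rw [cylF_eq_iInter]
  exact isOpen_iInter_of_finite fun i =>
    (continuous_apply ((i : ℕ))).isOpen_preimage _ (isOpen_discrete _)

variable {m : ℕ}

lemma mem_cylF_cons {x : Omega} {b : Bool} {u : Fin m → Bool} :
    x ∈ cylF (Fin.cons b u) ↔ x 0 = b ∧ shift x ∈ cylF u := by
  constructor
  · intro h
    refine ⟨h 0, fun i => ?_⟩
    have := h i.succ
    simpa [Fin.val_succ, shift, Nat.add_comm] using this
  · rintro ⟨h0, hs⟩ i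
    refine Fin.cases ?_ (fun j => ?_) i
    · simpa using h0
    · have := hs j
      simpa [Fin.val_succ, shift, Nat.add_comm] using this

lemma mem_cylF_snoc {x : Omega} {b : Bool} {u : Fin m → Bool} :
    x ∈ cylF (Fin.snoc u b) ↔ x ∈ cylF u ∧ x m = b := by
  constructor
  · intro h
    refine ⟨fun i => ?_, ?_⟩
    · have := h i.castSucc
      simpa [Fin.snoc_castSucc] using this
    · have := h (Fin.last m)
      simpa [Fin.snoc_last] using this
  · rintro ⟨hu, hb⟩ i
    refine Fin.lastCases ?_ (fun j => ?_) i
    · simpa [Fin.snoc_last] using hb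
    · have := hu j
      simpa [Fin.snoc_castSucc] using this

lemma preimage_shift_cylF (u : Fin m → Bool) :
    shift ⁻¹' cylF u = cylF (Fin.cons false u) ∪ cylF (Fin.cons true u) := by
  ext x
  simp only [Set.mem_preimage, Set.mem_union, mem_cylF_cons]
  cases h : x 0 <;> simp [h]

lemma cylF_eq_union_snoc (u : Fin m → Bool) :
    cylF u = cylF (Fin.snoc u false) ∪ cylF (Fin.snoc u true) := by
  ext x
  simp only [Set.mem_union, mem_cylF_snoc]
  cases h : x m <;> simp [h]

lemma disj_cons (u : Fin m → Bool) :
    Disjoint (cylF (Fin.cons false u)) (cylF (Fin.cons true u)) := by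
  rw [Set.disjoint_left]
  intro x hx hx'
  have h1 := (mem_cylF_cons.1 hx).1
  have h2 := (mem_cylF_cons.1 hx').1
  simp [h1] at h2

lemma disj_snoc (u : Fin m → Bool) :
    Disjoint (cylF (Fin.snoc u false)) (cylF (Fin.snoc u true)) := by
  rw [Set.disjoint_left]
  intro x hx hx'
  have h1 := (mem_cylF_snoc.1 hx).2
  have h2 := (mem_cylF_snoc.1 hx').2
  simp [h1] at h2

lemma measure_cons_sum (μ : Measure Omega) (u : Fin m → Bool) :
    μ (shift ⁻¹' cylF u) = μ (cylF (Fin.cons false u)) + μ (cylF (Fin.cons true u)) := by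
  rw [preimage_shift_cylF, measure_union (disj_cons u) (measurableSet_cylF _)]

lemma measure_snoc_sum (μ : Measure Omega) (u : Fin m → Bool) :
    μ (cylF u) = μ (cylF (Fin.snoc u false)) + μ (cylF (Fin.snoc u true)) := by
  rw [cylF_eq_union_snoc u, measure_union (disj_snoc u) (measurableSet_cylF _)]

lemma pairwise_disjoint_cylF {n : ℕ} :
    Pairwise (Function.onFun Disjoint (fun w : Fin n → Bool => cylF w)) := by
  intro w w' hne
  rw [Function.onFun, Set.disjoint_left]
  intro x hx hx'
  apply hne
  funext i
  rw [← hx i, ← hx' i]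

lemma iUnion_cylF (n : ℕ) : (⋃ w : Fin n → Bool, cylF w) = Set.univ := by
  ext x
  simp only [Set.mem_iUnion, Set.mem_univ, iff_true]
  exact ⟨fun i => x i, fun i => rfl⟩

lemma sum_measure_cylF (μ : Measure Omega) (n : ℕ) :
    ∑ w : Fin n → Bool, μ (cylF w) = μ Set.univ := by
  rw [← iUnion_cylF n, measure_iUnion pairwise_disjoint_cylF (fun w => measurableSet_cylF w),
    tsum_fintype]



variable {m : ℕ}

/-- The circulation polytope. -/
def Pol (m : ℕ) : Set ((Fin (m + 1) → Bool) → ℝ) :=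
  {c | (∀ w, 0 ≤ c w) ∧ (∑ w, c w = 1) ∧
      ∀ u : Fin m → Bool, (∑ b : Bool, c (Fin.cons b u)) = ∑ b : Bool, c (Fin.snoc u b)}

lemma rotSet_subset_Pol : rotSet (m + 1) ⊆ Pol m := by
  rintro c ⟨μ, ⟨hprob, hinv⟩, rfl⟩
  haveI := hprob
  refine ⟨fun w => ENNReal.toReal_nonneg, ?_, ?_⟩
  · simp only [piProj]
    rw [← ENNReal.toReal_sum (fun w _ => measure_ne_top μ _), sum_measure_cylF,
      measure_univ, ENNReal.toReal_one]
  · intro u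
    have h1 : ∑ b : Bool, piProj (m+1) μ (Fin.cons b u)
        = (μ (shift ⁻¹' cylF u)).toReal := by
      rw [measure_cons_sum μ u, Fintype.sum_bool,
        ENNReal.toReal_add (measure_ne_top μ _) (measure_ne_top μ _)]
      exact (add_comm _ _)
    have h2 : ∑ b : Bool, piProj (m+1) μ (Fin.snoc u b)
        = (μ (cylF u)).toReal := by
      rw [measure_snoc_sum μ u, Fintype.sum_bool,
        ENNReal.toReal_add (measure_ne_top μ _) (measure_ne_top μ _)]
      exact (add_comm _ _)
    rw [h1, h2, hinv _ (measurableSet_cylF u)]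

/-- Orbit measure applied to a measurable set: counting formula. -/
lemma orbitMeasure_apply (x : Omega) (p : ℕ) {s : Set Omega} (hs : MeasurableSet s) :
    orbitMeasure x p s
      = (p : ℝ≥0∞)⁻¹ * ((Finset.range p).filter (fun j => shift^[j] x ∈ s)).card := by
  rw [orbitMeasure, Measure.smul_apply, Measure.finset_sum_apply, smul_eq_mul]
  congr 1
  have h : ∀ j ∈ Finset.range p, Measure.dirac (shift^[j] x) s
      = if shift^[j] x ∈ s then (1 : ℝ≥0∞) else 0 := by
    intro j _
    rw [Measure.dirac_apply' _ hs, Set.indicator_apply]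
    simp
  rw [Finset.sum_congr rfl h, Finset.sum_boole]

lemma orbitMeasure_apply_any (x : Omega) (p : ℕ) (s : Set Omega) :
    orbitMeasure x p s
      = (p : ℝ≥0∞)⁻¹ * ∑ j ∈ Finset.range p, Measure.dirac (shift^[j] x) s := by
  rw [orbitMeasure, Measure.smul_apply, Measure.finset_sum_apply, smul_eq_mul]

lemma orbitMeasure_prob (x : Omega) {p : ℕ} (hp : 0 < p) :
    IsProbabilityMeasure (orbitMeasure x p) := by
  constructor
  rw [orbitMeasure_apply_any]
  have : ∀ j ∈ Finset.range p, Measure.dirac (shift^[j] x) Set.univ = 1 := fun j _ =>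
    Measure.dirac_apply_of_mem (Set.mem_univ _)
  rw [Finset.sum_congr rfl this, Finset.sum_const, nsmul_eq_mul, mul_one, Finset.card_range,
    ENNReal.inv_mul_cancel (by exact_mod_cast hp.ne') (by simp)]

lemma orbitMeasure_inv (x : Omega) {p : ℕ} (hper : shift^[p] x = x) :
    ∀ s : Set Omega, MeasurableSet s → orbitMeasure x p (shift ⁻¹' s) = orbitMeasure x p s := by
  intro s hs
  rw [orbitMeasure_apply_any, orbitMeasure_apply_any]
  congr 1
  have key : ∀ j, Measure.dirac (shift^[j] x) (shift ⁻¹' s)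
      = Measure.dirac (shift^[j+1] x) s := by
    intro j
    rw [Measure.dirac_apply' _ (measurable_shift hs), Measure.dirac_apply' _ hs]
    rw [Function.iterate_succ_apply']
    simp [Set.indicator_apply, Set.mem_preimage]
  rw [Finset.sum_congr rfl (fun j _ => key j)]
  -- ∑_{j<p} f (j+1) = ∑_{j<p} f j  where f j = dirac (σ^j x) s, using f p = f 0
  set f : ℕ → ℝ≥0∞ := fun j => Measure.dirac (shift^[j] x) s with hf
  have hfp : f p = f 0 := by simp only [hf, hper, Function.iterate_zero_apply]
  have h1 : ∑ j ∈ Finset.range (p+1), f j = (∑ j ∈ Finset.range p, f (j+1)) + f 0 :=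
    Finset.sum_range_succ' f p
  have h2 : ∑ j ∈ Finset.range (p+1), f j = (∑ j ∈ Finset.range p, f j) + f p :=
    Finset.sum_range_succ f p
  have hfin : f 0 ≠ ⊤ := by
    simp only [hf]
    exact measure_ne_top _ _
  have := h1.symm.trans h2
  rw [hfp] at this
  exact (ENNReal.add_left_inj hfin).1 this

lemma orbitMeasure_invariant (x : Omega) {p : ℕ} (hp : 0 < p) (hper : shift^[p] x = x) :
    InvariantProb (orbitMeasure x p) :=
  ⟨orbitMeasure_prob x hp, orbitMeasure_inv x hper⟩




lemma iterate_mul_fixed {x : Omega} {q : ℕ} (h : shift^[q] x = x) (k : ℕ) :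
    shift^[q * k] x = x := by
  rw [Function.iterate_mul]
  exact Function.iterate_fixed h k

lemma iterate_mod {x : Omega} {q : ℕ} (hq : 0 < q) (h : shift^[q] x = x) (a : ℕ) :
    shift^[a] x = shift^[a % q] x := by
  conv_lhs => rw [← Nat.mod_add_div a q]
  rw [Function.iterate_add_apply, iterate_mul_fixed h]

/-- The orbit as a set. -/
def orbSet (x : Omega) (p : ℕ) : Set Omega := {y | ∃ j < p, y = shift^[j] x}

lemma orbSet_finite (x : Omega) (p : ℕ) : (orbSet x p).Finite := by
  have : orbSet x p ⊆ (fun j => shift^[j] x) '' (Set.Iio p) := by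
    rintro y ⟨j, hj, rfl⟩; exact ⟨j, hj, rfl⟩
  exact ((Set.finite_Iio p).image _).subset this

lemma msupp_orbitMeasure (x : Omega) {p : ℕ} (hp : 0 < p) :
    msupp (orbitMeasure x p) = orbSet x p := by
  ext y
  constructor
  · intro hy
    by_contra hno
    have hU : IsOpen (orbSet x p)ᶜ := (orbSet_finite x p).isClosed.isOpen_compl
    have h0 := hy _ hU hno
    rw [orbitMeasure_apply_any] at h0
    have : ∀ j ∈ Finset.range p, Measure.dirac (shift^[j] x) (orbSet x p)ᶜ = 0 := by
      intro j hj
      rw [Measure.dirac_apply, Set.indicator_apply_eq_zero]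
      intro hmem
      exact absurd ⟨j, Finset.mem_range.1 hj, rfl⟩ hmem
    rw [Finset.sum_congr rfl this] at h0
    simp at h0
  · rintro ⟨j, hj, rfl⟩ U hU hyU
    rw [orbitMeasure_apply_any]
    refine ENNReal.mul_pos (by simp [hp.ne']) ?_
    have h1 : (1 : ℝ≥0∞) ≤ ∑ k ∈ Finset.range p, Measure.dirac (shift^[k] x) U := by
      have hle := Finset.single_le_sum (f := fun k => Measure.dirac (shift^[k] x) U)
        (fun k _ => by simp) (Finset.mem_range.2 hj)
      simpa [Measure.dirac_apply_of_mem hyU] using hle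
    intro h0
    rw [h0] at h1
    simp at h1

/-- Reindexing sum over range (k*q) by residues. -/
lemma sum_range_mul_mod {M : Type*} [AddCommMonoid M] (g : ℕ → M) (k q : ℕ) :
    ∑ j ∈ Finset.range (k * q), g (j % q) = k • ∑ r ∈ Finset.range q, g r := by
  induction k with
  | zero => simp
  | succ k ih =>
    rw [Nat.succ_mul, Finset.sum_range_add, ih, succ_nsmul]
    congr 1
    refine Finset.sum_congr rfl fun r hr => ?_
    rw [Nat.mul_add_mod', Nat.mod_eq_of_lt (Finset.mem_range.1 hr)]

lemma orbitMeasure_of_dvd (x : Omega) {p q : ℕ} (hp : 0 < p) (hq : 0 < q) (hdvd : q ∣ p)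
    (hper : shift^[q] x = x) : orbitMeasure x p = orbitMeasure x q := by
  have hrw : ∀ j ∈ Finset.range p, Measure.dirac (shift^[j] x)
      = Measure.dirac (shift^[j % q] x) := fun j _ => by rw [← iterate_mod hq hper j]
  have hpq : p = (p / q) * q := (Nat.div_mul_cancel hdvd).symm
  rw [orbitMeasure, Finset.sum_congr rfl hrw,
    show Finset.range p = Finset.range ((p/q) * q) from by rw [Nat.div_mul_cancel hdvd],
    sum_range_mul_mod (fun r => Measure.dirac (shift^[r] x)) (p/q) q,
    ← Nat.cast_smul_eq_nsmul ℝ≥0∞, smul_smul, orbitMeasure]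
  congr 1
  have hcast : ((p / q : ℕ) : ℝ≥0∞) * q = p := by
    rw [← Nat.cast_mul, Nat.div_mul_cancel hdvd]
  have hq0 : (q : ℝ≥0∞) ≠ 0 := by exact_mod_cast hq.ne'
  have hp0 : (p : ℝ≥0∞) ≠ 0 := by exact_mod_cast hp.ne'
  have hdiv : ((p / q : ℕ) : ℝ≥0∞) = (p : ℝ≥0∞) / q :=
    (ENNReal.eq_div_iff hq0 (by simp)).2 (by rw [mul_comm]; exact hcast)
  rw [hdiv, ENNReal.div_eq_inv_mul, mul_left_comm,
    ENNReal.inv_mul_cancel hp0 (by simp), mul_one]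

/-- Minimal period. -/
noncomputable def minper (x : Omega) : ℕ := sInf {k | 0 < k ∧ shift^[k] x = x}

lemma minper_spec {x : Omega} {p : ℕ} (hp : 0 < p) (hper : shift^[p] x = x) :
    0 < minper x ∧ shift^[minper x] x = x :=
  Nat.sInf_mem (⟨p, hp, hper⟩ : {k | 0 < k ∧ shift^[k] x = x}.Nonempty)

lemma minper_dvd {x : Omega} {p : ℕ} (hp : 0 < p) (hper : shift^[p] x = x) :
    minper x ∣ p := by
  obtain ⟨hq, hqper⟩ := minper_spec hp hper
  set q := minper x
  have hmod : shift^[p % q] x = x := by rw [← iterate_mod hq hqper]; exact hper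
  rcases Nat.eq_zero_or_pos (p % q) with h | h
  · exact Nat.dvd_of_mod_eq_zero h
  · have : q ≤ p % q := Nat.sInf_le ⟨h, hmod⟩
    exact absurd this (Nat.not_le.2 (Nat.mod_lt p hq))

lemma minper_inj {x : Omega} {p : ℕ} (hp : 0 < p) (hper : shift^[p] x = x)
    {i j : ℕ} (hi : i < minper x) (hj : j < minper x) (h : shift^[i] x = shift^[j] x) :
    i = j := by
  obtain ⟨hq, hqper⟩ := minper_spec hp hper
  suffices H : ∀ i j : ℕ, i < minper x → j < minper x → shift^[i] x = shift^[j] x →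
      i < j → False by
    rcases lt_trichotomy i j with hlt | heq | hgt
    · exact absurd (H i j hi hj h hlt) not_false
    · exact heq
    · exact absurd (H j i hj hi h.symm hgt) not_false
  clear hi hj h i j
  intro i j hi hj h hlt
  set q := minper x
  have key : shift^[q - j + i] x = x := by
    have h1 : shift^[q - j] (shift^[j] x) = x := by
      rw [← Function.iterate_add_apply, Nat.sub_add_cancel hj.le]; exact hqper
    rw [← h, ← Function.iterate_add_apply] at h1
    exact h1
  have hpos : 0 < q - j + i := by omega
  have hle : q ≤ q - j + i :=
    Nat.sInf_le (show (q - j + i) ∈ {k | 0 < k ∧ shift^[k] x = x} from ⟨hpos, key⟩)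
  omega

section CycleMain
variable {m : ℕ}


lemma sum_bool_eq (g : Bool → ℝ) (b0 : Bool) : ∑ b : Bool, g b = g b0 + g (!b0) := by
  cases b0 <;> simp [Fintype.sum_bool] <;> ring

section Cycle

variable {p : ℕ} [NeZero p] {wseq : ZMod p → (Fin (m + 1) → Bool)}

/-- Cycle edge property. -/
def CycEdges (wseq : ZMod p → (Fin (m + 1) → Bool)) : Prop :=
  ∀ t, Fin.tail (wseq t) = Fin.init (wseq (t + 1))

/-- Cycle simplicity: distinct initial nodes. -/
def CycInj (wseq : ZMod p → (Fin (m + 1) → Bool)) : Prop :=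
  Function.Injective (fun t => Fin.init (wseq t))

lemma CycInj.wseq_inj (hinj : CycInj wseq) : Function.Injective wseq :=
  fun t t' h => hinj (by simp only [h])

lemma rigid_step (hedge : CycEdges wseq) (hinj : CycInj wseq)
    {c : (Fin (m + 1) → Bool) → ℝ} (hc : c ∈ Pol m)
    (hsupp : ∀ w, (∀ t, wseq t ≠ w) → c w = 0) (t : ZMod p) :
    c (wseq (t + 1)) = c (wseq t) := by
  obtain ⟨hpos, hsum, hkir⟩ := hc
  set u : Fin m → Bool := Fin.tail (wseq t) with hu
  have hu' : u = Fin.init (wseq (t + 1)) := hedge t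
  have hin : ∑ b : Bool, c (Fin.cons b u) = c (wseq t) := by
    rw [sum_bool_eq (fun b => c (Fin.cons b u)) (wseq t 0)]
    have h1 : Fin.cons (wseq t 0) u = wseq t := Fin.cons_self_tail (wseq t)
    have h2 : c (Fin.cons (!(wseq t 0)) u) = 0 := by
      apply hsupp
      intro s heq
      have htail : Fin.init (wseq (s + 1)) = u := by
        rw [← hedge s, heq, Fin.tail_cons]
      have hs1 : s + 1 = t + 1 :=
        hinj (show Fin.init (wseq (s + 1)) = Fin.init (wseq (t + 1)) by rw [htail, hu'])
      have hst : s = t := add_right_cancel hs1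
      rw [hst] at heq
      have h0 := congrFun heq 0
      simp at h0
    rw [h1, h2, add_zero]
  have hout : ∑ b : Bool, c (Fin.snoc u b) = c (wseq (t + 1)) := by
    rw [sum_bool_eq (fun b => c (Fin.snoc u b)) (wseq (t + 1) (Fin.last m))]
    have h1 : Fin.snoc u (wseq (t + 1) (Fin.last m)) = wseq (t + 1) := by
      rw [hu']; exact Fin.snoc_init_self _
    have h2 : c (Fin.snoc u (!(wseq (t + 1) (Fin.last m)))) = 0 := by
      apply hsupp
      intro s heq
      have hinit : Fin.init (wseq s) = Fin.init (wseq (t + 1)) := by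
        rw [heq, Fin.init_snoc, hu']
      have hst : s = t + 1 :=
        hinj (show Fin.init (wseq s) = Fin.init (wseq (t + 1)) from hinit)
      rw [hst] at heq
      have h0 := congrFun heq (Fin.last m)
      simp at h0
    rw [h1, h2, add_zero]
  rw [← hin, ← hout, hkir u]

lemma rigid_const (hedge : CycEdges wseq) (hinj : CycInj wseq)
    {c : (Fin (m + 1) → Bool) → ℝ} (hc : c ∈ Pol m)
    (hsupp : ∀ w, (∀ t, wseq t ≠ w) → c w = 0) (t : ZMod p) :
    c (wseq t) = c (wseq 0) := by
  have hnat : ∀ k : ℕ, c (wseq (k : ZMod p)) = c (wseq 0) := by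
    intro k
    induction k with
    | zero => simp
    | succ k ih =>
      have : ((k + 1 : ℕ) : ZMod p) = (k : ZMod p) + 1 := by push_cast; ring
      rw [this, rigid_step hedge hinj hc hsupp, ih]
  have := hnat t.val
  rwa [ZMod.natCast_rightInverse t] at this

/-- Rigidity: a circulation supported in a simple cycle is uniform on it. -/
lemma rigid (hedge : CycEdges wseq) (hinj : CycInj wseq)
    {c : (Fin (m + 1) → Bool) → ℝ} (hc : c ∈ Pol m)
    (hsupp : ∀ w, (∀ t, wseq t ≠ w) → c w = 0) (t : ZMod p) :
    c (wseq t) = (p : ℝ)⁻¹ := by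
  classical
  obtain ⟨hpos, hsum, hkir⟩ := hc
  have himg : ∑ w ∈ Finset.univ.image wseq, c w = 1 := by
    rw [← hsum]
    apply Finset.sum_subset (Finset.subset_univ _)
    intro w _ hw
    apply hsupp
    intro s heq
    exact hw (Finset.mem_image.2 ⟨s, Finset.mem_univ s, heq⟩)
  rw [Finset.sum_image (fun s _ s' _ h => hinj.wseq_inj h)] at himg
  have hconst : ∀ s : ZMod p, c (wseq s) = c (wseq 0) :=
    rigid_const hedge hinj ⟨hpos, hsum, hkir⟩ hsupp
  rw [Finset.sum_congr rfl (fun s _ => hconst s), Finset.sum_const, Finset.card_univ,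
    ZMod.card p, nsmul_eq_mul] at himg
  have hp0 : (p : ℝ) ≠ 0 := by
    have := NeZero.pos p
    exact_mod_cast this.ne'
  rw [hconst t]
  field_simp at himg ⊢
  linarith

end Cycle

lemma exists_pos_arc {c : (Fin (m + 1) → Bool) → ℝ} (hc : c ∈ Pol m) :
    ∃ w, 0 < c w := by
  by_contra h
  push_neg at h
  have : ∀ w, c w = 0 := fun w => le_antisymm (h w) (hc.1 w)
  have hsum := hc.2.1
  rw [Finset.sum_congr rfl (fun w _ => this w)] at hsum
  simp at hsum

lemma exists_step {c : (Fin (m + 1) → Bool) → ℝ} (hc : c ∈ Pol m)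
    {w : Fin (m + 1) → Bool} (hw : 0 < c w) :
    ∃ w', Fin.init w' = Fin.tail w ∧ 0 < c w' := by
  obtain ⟨hpos, hsum, hkir⟩ := hc
  set u : Fin m → Bool := Fin.tail w with hu
  have hin : 0 < ∑ b : Bool, c (Fin.cons b u) := by
    rw [sum_bool_eq (fun b => c (Fin.cons b u)) (w 0)]
    have h1 : Fin.cons (w 0) u = w := Fin.cons_self_tail w
    rw [h1]
    have := hpos (Fin.cons (!(w 0)) u)
    linarith
  rw [hkir u] at hin
  have : ∃ b, 0 < c (Fin.snoc u b) := by
    by_contra h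
    push_neg at h
    have h1 : c (Fin.snoc u false) = 0 := le_antisymm (h false) (hpos _)
    have h2 : c (Fin.snoc u true) = 0 := le_antisymm (h true) (hpos _)
    rw [Fintype.sum_bool, h1, h2] at hin
    linarith
  obtain ⟨b, hb⟩ := this
  exact ⟨Fin.snoc u b, by simp, hb⟩

/-- Extraction of a simple cycle from the support of a circulation. -/
lemma exists_cycle {c : (Fin (m + 1) → Bool) → ℝ} (hc : c ∈ Pol m) :
    ∃ (p : ℕ) (hp : 0 < p) (wseq : ZMod p → (Fin (m + 1) → Bool)),
      ∀ (_ : NeZero p), CycEdges wseq ∧ CycInj wseq ∧ ∀ t, 0 < c (wseq t) := by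
  classical
  obtain ⟨w0, hw0⟩ := exists_pos_arc hc
  -- the step function
  let g : (Fin (m + 1) → Bool) → (Fin (m + 1) → Bool) := fun w =>
    if h : 0 < c w then (exists_step hc h).choose else w
  let a : ℕ → (Fin (m + 1) → Bool) := fun k => g^[k] w0
  have ha0 : a 0 = w0 := rfl
  have hsucc : ∀ k, a (k + 1) = g (a k) := by
    intro k
    simp only [a, Function.iterate_succ_apply']
  have hpos : ∀ k, 0 < c (a k) := by
    intro k
    induction k with
    | zero => exact hw0
    | succ k ih =>
      rw [hsucc k]
      simp only [g, dif_pos ih]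
      exact (exists_step hc ih).choose_spec.2
  have hedge : ∀ k, Fin.init (a (k + 1)) = Fin.tail (a k) := by
    intro k
    rw [hsucc k]
    simp only [g, dif_pos (hpos k)]
    exact (exists_step hc (hpos k)).choose_spec.1
  -- pigeonhole on nodes
  set u : ℕ → (Fin m → Bool) := fun k => Fin.init (a k) with husef
  have hPex : ∃ j, ∃ i, i < j ∧ u i = u j := by
    obtain ⟨i, j, hne, hij⟩ := Finite.exists_ne_map_eq_of_infinite u
    rcases lt_or_gt_of_ne hne with h | h
    · exact ⟨j, i, h, hij⟩
    · exact ⟨i, j, h, hij.symm⟩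
  let j1 := Nat.find hPex
  obtain ⟨i1, hi1, hu1⟩ := Nat.find_spec hPex
  have hdist : ∀ {s t : ℕ}, s < t → t < j1 → u s ≠ u t := by
    intro s t hst htj heq
    exact Nat.find_min hPex htj ⟨s, hst, heq⟩
  set p := j1 - i1 with hpdef
  have hp : 0 < p := by omega
  refine ⟨p, hp, fun t => a (i1 + t.val), fun hnz => ?_⟩
  haveI := hnz
  have hval : ∀ t : ZMod p, t.val < p := fun t => ZMod.val_lt t
  have hvadd : ∀ t : ZMod p, (t + 1).val = (t.val + 1) % p := by
    intro t
    rw [ZMod.val_add, ZMod.val_one_eq_one_mod,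
      show t.val + 1 % p = t.val % p + 1 % p from by rw [Nat.mod_eq_of_lt (hval t)],
      ← Nat.add_mod]
  refine ⟨?_, ?_, fun t => hpos _⟩
  · intro t
    show Fin.tail (a (i1 + t.val)) = Fin.init (a (i1 + (t + 1).val))
    rcases Nat.lt_or_ge (t.val + 1) p with hlt | hge
    · have hv1 : (t + 1).val = t.val + 1 := by
        rw [hvadd t, Nat.mod_eq_of_lt hlt]
      rw [hv1, show i1 + (t.val + 1) = (i1 + t.val) + 1 from by ring]
      exact (hedge (i1 + t.val)).symm
    · have hteq : t.val + 1 = p := by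
        have := hval t
        omega
      have hv0 : (t + 1).val = 0 := by
        rw [hvadd t, hteq, Nat.mod_self]
      rw [hv0]
      show Fin.tail (a (i1 + t.val)) = Fin.init (a i1)
      have h2 : (i1 + t.val) + 1 = j1 := by omega
      calc Fin.tail (a (i1 + t.val))
          = Fin.init (a ((i1 + t.val) + 1)) := (hedge (i1 + t.val)).symm
        _ = Fin.init (a j1) := by rw [h2]
        _ = Fin.init (a i1) := hu1.symm
  · intro s t heqq
    have heq : u (i1 + s.val) = u (i1 + t.val) := heqq
    have hs : i1 + s.val < j1 := by have := hval s; omega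
    have ht : i1 + t.val < j1 := by have := hval t; omega
    have hv : s.val = t.val := by
      by_contra hne
      rcases lt_or_gt_of_ne hne with h | h
      · exact hdist (by omega : i1 + s.val < i1 + t.val) ht heq
      · exact hdist (by omega : i1 + t.val < i1 + s.val) hs heq.symm
    exact ZMod.val_injective _ hv


end CycleMain


-- previous-chunk facts as axioms (will be theorems in final file)

variable {m : ℕ}

section Cycle
variable {p : ℕ} [NeZero p]


variable {wseq : ZMod p → (Fin (m + 1) → Bool)}

/-- The periodic point tracing a cycle. -/
def cycPoint (wseq : ZMod p → (Fin (m + 1) → Bool)) : Omega :=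
  fun k => wseq ((k : ZMod p)) 0

lemma shift_iterate_apply (y : Omega) (j k : ℕ) : shift^[j] y k = y (k + j) := by
  induction j generalizing y k with
  | zero => rfl
  | succ j ih =>
    rw [Function.iterate_succ_apply, ih (shift y) k]
    rfl

lemma cyc_step (hedge : CycEdges wseq) :
    ∀ (i : ℕ) (hi : i ≤ m) (t : ZMod p),
      wseq (t + (i : ZMod p)) 0 = wseq t ⟨i, Nat.lt_succ_of_le hi⟩ := by
  intro i
  induction i with
  | zero =>
    intro hi t
    simp only [Nat.cast_zero, add_zero]
    congr 1
  | succ i ih =>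
    intro hi t
    have h1 : t + ((i + 1 : ℕ) : ZMod p) = (t + 1) + (i : ZMod p) := by push_cast; ring
    rw [h1, ih (by omega) (t + 1)]
    have hedget := congrFun (hedge t) ⟨i, by omega⟩
    simp only [Fin.tail, Fin.init] at hedget
    have h2 : (⟨i, by omega⟩ : Fin m).castSucc
        = (⟨i, Nat.lt_succ_of_le (by omega)⟩ : Fin (m + 1)) := by ext; simp
    have h3 : (⟨i, by omega⟩ : Fin m).succ
        = (⟨i + 1, Nat.lt_succ_of_le hi⟩ : Fin (m + 1)) := by ext; simp
    rw [h2, h3] at hedget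
    exact hedget.symm

lemma cycPoint_window (hedge : CycEdges wseq) (j : ℕ) (i : Fin (m + 1)) :
    shift^[j] (cycPoint wseq) (i : ℕ) = wseq ((j : ℕ) : ZMod p) i := by
  rw [shift_iterate_apply]
  show wseq (((i : ℕ) + j : ℕ) : ZMod p) 0 = wseq ((j : ℕ) : ZMod p) i
  have h1 : (((i : ℕ) + j : ℕ) : ZMod p) = ((j : ℕ) : ZMod p) + ((i : ℕ) : ZMod p) := by
    push_cast; ring
  rw [h1, cyc_step hedge (i : ℕ) (by omega) _]

lemma cycPoint_per (hedge : CycEdges wseq) : shift^[p] (cycPoint wseq) = cycPoint wseq := by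
  funext k
  rw [shift_iterate_apply]
  show wseq (((k + p : ℕ)) : ZMod p) 0 = wseq ((k : ℕ) : ZMod p) 0
  have hc : ((k + p : ℕ) : ZMod p) = ((k : ℕ) : ZMod p) := by
    push_cast [ZMod.natCast_self]; ring
  rw [hc]

lemma cycPoint_iter_eq (hedge : CycEdges wseq) {j k : ℕ}
    (h : (j : ZMod p) = (k : ZMod p)) :
    shift^[j] (cycPoint wseq) = shift^[k] (cycPoint wseq) := by
  funext l
  rw [shift_iterate_apply, shift_iterate_apply]
  show wseq (((l + j : ℕ)) : ZMod p) 0 = wseq (((l + k : ℕ)) : ZMod p) 0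
  have hc : ((l + j : ℕ) : ZMod p) = ((l + k : ℕ) : ZMod p) := by
    push_cast [h]; ring
  rw [hc]

lemma iter_mem_cylF_iff (hedge : CycEdges wseq) (j : ℕ) (w : Fin (m + 1) → Bool) :
    shift^[j] (cycPoint wseq) ∈ cylF w ↔ wseq ((j : ℕ) : ZMod p) = w := by
  constructor
  · intro h
    funext i
    rw [← cycPoint_window hedge j i]
    exact h i
  · rintro rfl
    intro i
    exact cycPoint_window hedge j i

lemma cycMeasure_piProj (hedge : CycEdges wseq) (hinj : CycInj wseq)
    (w : Fin (m + 1) → Bool) :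
    piProj (m + 1) (orbitMeasure (cycPoint wseq) p) w
      = if ∃ t, wseq t = w then (p : ℝ)⁻¹ else 0 := by
  have hp : 0 < p := NeZero.pos p
  rw [piProj, orbitMeasure_apply _ _ (measurableSet_cylF w)]
  have hfil : (Finset.range p).filter (fun j => shift^[j] (cycPoint wseq) ∈ cylF w)
      = (Finset.range p).filter (fun j => wseq ((j : ℕ) : ZMod p) = w) := by
    apply Finset.filter_congr
    intro j _
    simp only [iter_mem_cylF_iff hedge j w, eq_iff_iff]
  rw [hfil]
  have hcard : ((Finset.range p).filter (fun j => wseq ((j : ℕ) : ZMod p) = w)).card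
      = (Finset.univ.filter (fun t : ZMod p => wseq t = w)).card := by
    apply Finset.card_bij (fun j _ => ((j : ℕ) : ZMod p))
    · intro j hj
      simp only [Finset.mem_filter, Finset.mem_univ, true_and]
      exact (Finset.mem_filter.1 hj).2
    · intro j hj j' hj' heq
      have h1 : j < p := Finset.mem_range.1 (Finset.mem_filter.1 hj).1
      have h2 : j' < p := Finset.mem_range.1 (Finset.mem_filter.1 hj').1
      have h3 := congrArg ZMod.val heq
      rwa [ZMod.val_cast_of_lt h1, ZMod.val_cast_of_lt h2] at h3
    · intro t ht
      refine ⟨t.val, Finset.mem_filter.2 ⟨Finset.mem_range.2 (ZMod.val_lt t), ?_⟩, ?_⟩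
      · rw [ZMod.natCast_rightInverse t]
        exact (Finset.mem_filter.1 ht).2
      · rw [ZMod.natCast_rightInverse t]
  rw [hcard]
  by_cases h : ∃ t, wseq t = w
  · obtain ⟨t0, ht0⟩ := h
    have : Finset.univ.filter (fun t : ZMod p => wseq t = w) = {t0} := by
      ext t
      simp only [Finset.mem_filter, Finset.mem_univ, true_and, Finset.mem_singleton]
      constructor
      · intro h'
        exact hinj.wseq_inj (h'.trans ht0.symm)
      · rintro rfl; exact ht0
    rw [this, if_pos ⟨t0, ht0⟩]
    simp [ENNReal.toReal_inv]
  · have : Finset.univ.filter (fun t : ZMod p => wseq t = w) = ∅ := by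
      ext t
      simp only [Finset.mem_filter, Finset.mem_univ, true_and, Finset.notMem_empty,
        iff_false]
      intro h'
      exact h ⟨t, h'⟩
    rw [this, if_neg h]
    simp

lemma cycMeasure_memCn (hedge : CycEdges wseq) (hinj : CycInj wseq) :
    MemCn (m + 1) (orbitMeasure (cycPoint wseq) p) := by
  have hp : 0 < p := NeZero.pos p
  constructor
  · exact ⟨cycPoint wseq, p, hp, cycPoint_per hedge, rfl⟩
  · rw [msupp_orbitMeasure _ hp]
    rintro y ⟨j, hj, rfl⟩ z ⟨k, hk, rfl⟩ hagree
    have hinit : Fin.init (wseq ((j : ℕ) : ZMod p)) = Fin.init (wseq ((k : ℕ) : ZMod p)) := by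
      funext i
      show wseq ((j : ℕ) : ZMod p) i.castSucc = wseq ((k : ℕ) : ZMod p) i.castSucc
      rw [← cycPoint_window hedge j i.castSucc, ← cycPoint_window hedge k i.castSucc]
      have : (i.castSucc : ℕ) = (i : ℕ) := rfl
      rw [this]
      exact hagree (i : ℕ) (by omega)
    exact cycPoint_iter_eq hedge (hinj hinit)

end Cycle



-- axioms from previous chunks

/-- Canonical representation of a periodic measure, with distinct orbit points. -/
lemma canon {μ : Measure Omega} (hμ : IsPeriodicMeasure μ) :
    ∃ (x : Omega) (q : ℕ), 0 < q ∧ shift^[q] x = x ∧ μ = orbitMeasure x q ∧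
      ∀ i j, i < q → j < q → shift^[i] x = shift^[j] x → i = j := by
  obtain ⟨x, p, hp, hper, hμeq⟩ := hμ
  obtain ⟨hq, hqper⟩ := minper_spec hp hper
  refine ⟨x, _, hq, hqper, ?_, fun i j hi hj h => minper_inj hp hper hi hj h⟩
  rw [hμeq, orbitMeasure_of_dvd x hp hq (minper_dvd hp hper) hqper]

/-- Real counting formula for the projection of an orbit measure. -/
lemma piProj_orbit (x : Omega) {q : ℕ} (hq : 0 < q) (w : Fin (m + 1) → Bool) :
    piProj (m + 1) (orbitMeasure x q) w
      = (q : ℝ)⁻¹ * ((Finset.range q).filter (fun j => shift^[j] x ∈ cylF w)).card := by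
  rw [piProj, orbitMeasure_apply x q (measurableSet_cylF w), ENNReal.toReal_mul,
    ENNReal.toReal_inv, ENNReal.toReal_natCast, ENNReal.toReal_natCast]

variable {m : ℕ}

lemma piProj_orbit_pos_iff (x : Omega) {q : ℕ} (hq : 0 < q) (w : Fin (m + 1) → Bool) :
    0 < piProj (m + 1) (orbitMeasure x q) w ↔ ∃ j < q, shift^[j] x ∈ cylF w := by
  rw [piProj_orbit x hq w]
  have hqR : (0:ℝ) < (q : ℝ)⁻¹ := by positivity
  constructor
  · intro h
    have : ((Finset.range q).filter (fun j => shift^[j] x ∈ cylF w)).card ≠ 0 := by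
      intro h0
      rw [h0] at h
      simp at h
    obtain ⟨j, hj⟩ := Finset.card_ne_zero.1 this
    rw [Finset.mem_filter, Finset.mem_range] at hj
    exact ⟨j, hj.1, hj.2⟩
  · rintro ⟨j, hj, hjmem⟩
    have hcard : 0 < ((Finset.range q).filter (fun j => shift^[j] x ∈ cylF w)).card :=
      Finset.card_pos.2 ⟨j, Finset.mem_filter.2 ⟨Finset.mem_range.2 hj, hjmem⟩⟩
    have : (0:ℝ) < ((Finset.range q).filter (fun j => shift^[j] x ∈ cylF w)).card := by
      exact_mod_cast hcard
    positivity

lemma mem_cylF_self (y : Omega) (w : Fin (m + 1) → Bool) :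
    y ∈ cylF w ↔ w = fun i : Fin (m + 1) => y (i : ℕ) := by
  constructor
  · intro h
    funext i
    exact (h i).symm
  · rintro rfl i
    rfl

/-- The `n`-window of `y` at position `k`. -/
def winN (m k : ℕ) (y : Omega) : Fin (m + 1) → Bool := fun i => y ((i : ℕ) + k)

lemma iter_mem_winN (y : Omega) (k : ℕ) : shift^[k] y ∈ cylF (winN m k y) := by
  intro i
  rw [shift_iterate_apply]
  rfl

/-- From a MemCn measure to a simple cycle. -/
lemma memCn_cycle {μ : Measure Omega} (hμ : MemCn (m + 1) μ) :
    ∃ (x : Omega) (q : ℕ) (hq : 0 < q), shift^[q] x = x ∧ μ = orbitMeasure x q ∧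
      ∀ (_ : NeZero q),
        CycEdges (fun t : ZMod q => fun i : Fin (m + 1) => shift^[t.val] x (i : ℕ)) ∧
        CycInj (fun t : ZMod q => fun i : Fin (m + 1) => shift^[t.val] x (i : ℕ)) ∧
        (∀ w, (∀ t : ZMod q,
          (fun i : Fin (m + 1) => shift^[t.val] x (i : ℕ)) ≠ w) → piProj (m + 1) μ w = 0) ∧
        (∀ t : ZMod q, 0 < piProj (m + 1) μ
          ((fun i : Fin (m + 1) => shift^[t.val] x (i : ℕ)))) := by
  obtain ⟨x, q, hq, hqper, hμeq, hdist⟩ := canon hμ.1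
  refine ⟨x, q, hq, hqper, hμeq, fun hnz => ?_⟩
  haveI := hnz
  set wseq : ZMod q → (Fin (m + 1) → Bool) :=
    fun t => fun i : Fin (m + 1) => shift^[t.val] x (i : ℕ) with hwseq
  have hxmod : ∀ a, x a = x (a % q) := by
    intro a
    have h1 := congrFun (iterate_mod hq hqper a) 0
    rw [shift_iterate_apply, shift_iterate_apply, Nat.zero_add, Nat.zero_add] at h1
    exact h1
  have hvadd : ∀ t : ZMod q, (t + 1).val = (t.val + 1) % q := by
    intro t
    rw [ZMod.val_add, ZMod.val_one_eq_one_mod,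
      show t.val + 1 % q = t.val % q + 1 % q from by rw [Nat.mod_eq_of_lt (ZMod.val_lt t)],
      ← Nat.add_mod]
  have hsupp_eq : msupp μ = orbSet x q := by rw [hμeq, msupp_orbitMeasure x hq]
  have hedge : CycEdges wseq := by
    intro t
    funext i
    show shift^[t.val] x ((i.succ : ℕ)) = shift^[(t+1).val] x ((i.castSucc : ℕ))
    rw [shift_iterate_apply, shift_iterate_apply, hvadd t]
    show x ((i : ℕ) + 1 + t.val) = x ((i : ℕ) + (t.val + 1) % q)
    rw [hxmod ((i : ℕ) + 1 + t.val), hxmod ((i : ℕ) + (t.val + 1) % q)]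
    congr 1
    rw [Nat.add_mod (i : ℕ) ((t.val + 1) % q), Nat.mod_mod_of_dvd _ dvd_rfl, ← Nat.add_mod]
    congr 1
    ring
  have hinj : CycInj wseq := by
    intro t t' h
    have hpts : shift^[t.val] x = shift^[t'.val] x := by
      apply hμ.2
      · rw [hsupp_eq]; exact ⟨t.val, ZMod.val_lt t, rfl⟩
      · rw [hsupp_eq]; exact ⟨t'.val, ZMod.val_lt t', rfl⟩
      · intro k hk
        have := congrFun h ⟨k, by omega⟩
        simpa [Fin.init] using this
    have := hdist t.val t'.val (ZMod.val_lt t) (ZMod.val_lt t') hpts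
    exact ZMod.val_injective _ this
  refine ⟨hedge, hinj, ?_, ?_⟩
  · intro w hw
    rw [hμeq, piProj_orbit x hq w]
    have hempty : (Finset.range q).filter (fun j => shift^[j] x ∈ cylF w) = ∅ := by
      rw [Finset.filter_eq_empty_iff]
      intro j hj
      intro hmem
      apply hw ((j : ZMod q))
      rw [(mem_cylF_self _ w).1 hmem]
      funext i
      show shift^[((j : ZMod q)).val] x (i : ℕ) = shift^[j] x (i : ℕ)
      rw [ZMod.val_cast_of_lt (Finset.mem_range.1 hj)]
    rw [hempty]
    simp
  · intro t
    rw [hμeq, piProj_orbit_pos_iff x hq]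
    exact ⟨t.val, ZMod.val_lt t, fun i => rfl⟩

/-- MemCn measures project to extreme points. -/
lemma memCn_extreme {μ : Measure Omega} (hμ : MemCn (m + 1) μ) :
    piProj (m + 1) μ ∈ Set.extremePoints ℝ (rotSet (m + 1)) := by
  obtain ⟨x, q, hq, hqper, hμeq, hcyc⟩ := memCn_cycle hμ
  haveI : NeZero q := ⟨hq.ne'⟩
  obtain ⟨hedge, hinj, hoff, hpos⟩ := hcyc inferInstance
  set c := piProj (m + 1) μ with hc
  have hcrot : c ∈ rotSet (m + 1) := by
    refine ⟨μ, ?_, rfl⟩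
    rw [hμeq]
    exact orbitMeasure_invariant x hq hqper
  have hcpol : c ∈ Pol m := rotSet_subset_Pol hcrot
  rw [mem_extremePoints]
  refine ⟨hcrot, ?_⟩
  intro c1 hc1 c2 hc2 hseg
  obtain ⟨a, b, ha, hb, hab, habc⟩ := hseg
  have hc1pol := rotSet_subset_Pol hc1
  have hc2pol := rotSet_subset_Pol hc2
  set wseq : ZMod q → (Fin (m + 1) → Bool) :=
    fun t => fun i : Fin (m + 1) => shift^[t.val] x (i : ℕ) with hwseq
  have hoff1 : ∀ w, (∀ t : ZMod q, wseq t ≠ w) → c1 w = 0 := by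
    intro w hw
    have hcw : c w = 0 := hoff w hw
    have := congrFun habc w
    simp only [Pi.add_apply, Pi.smul_apply, smul_eq_mul] at this
    have h1 := hc1pol.1 w
    have h2 := hc2pol.1 w
    nlinarith
  have hoff2 : ∀ w, (∀ t : ZMod q, wseq t ≠ w) → c2 w = 0 := by
    intro w hw
    have hcw : c w = 0 := hoff w hw
    have := congrFun habc w
    simp only [Pi.add_apply, Pi.smul_apply, smul_eq_mul] at this
    have h1 := hc1pol.1 w
    have h2 := hc2pol.1 w
    nlinarith
  have hcoff : ∀ w, (∀ t : ZMod q, wseq t ≠ w) → c w = 0 := hoff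
  have heq1 : c1 = c := by
    funext w
    by_cases h : ∃ t : ZMod q, wseq t = w
    · obtain ⟨t, rfl⟩ := h
      rw [rigid hedge hinj hc1pol hoff1 t, rigid hedge hinj hcpol hcoff t]
    · rw [hoff1 w (fun t ht => h ⟨t, ht⟩), hcoff w (fun t ht => h ⟨t, ht⟩)]
  have heq2 : c2 = c := by
    funext w
    by_cases h : ∃ t : ZMod q, wseq t = w
    · obtain ⟨t, rfl⟩ := h
      rw [rigid hedge hinj hc2pol hoff2 t, rigid hedge hinj hcpol hcoff t]
    · rw [hoff2 w (fun t ht => h ⟨t, ht⟩), hcoff w (fun t ht => h ⟨t, ht⟩)]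
  exact ⟨heq1, heq2⟩


section FMain
variable {m : ℕ}



section Cycle
variable {p : ℕ} [NeZero p]

/-- The uniform circulation on a cycle. -/
noncomputable def cycVec (wseq : ZMod p → (Fin (m + 1) → Bool)) :
    (Fin (m + 1) → Bool) → ℝ :=
  fun w => if ∃ t, wseq t = w then (p : ℝ)⁻¹ else 0

variable {wseq : ZMod p → (Fin (m + 1) → Bool)}

-- axioms from previous chunks

lemma cycVec_eq_piProj (hedge : CycEdges wseq) (hinj : CycInj wseq) :
    cycVec wseq = piProj (m + 1) (orbitMeasure (cycPoint wseq) p) := by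
  funext w
  rw [cycMeasure_piProj hedge hinj w, cycVec]

lemma cycVec_mem_rotSet (hedge : CycEdges wseq) (hinj : CycInj wseq) :
    cycVec wseq ∈ rotSet (m + 1) := by
  rw [cycVec_eq_piProj hedge hinj]
  exact ⟨_, orbitMeasure_invariant _ (NeZero.pos p) (cycPoint_per hedge), rfl⟩

lemma cycVec_mem_Pol (hedge : CycEdges wseq) (hinj : CycInj wseq) :
    cycVec wseq ∈ Pol m :=
  rotSet_subset_Pol (cycVec_mem_rotSet hedge hinj)

lemma sum_cycVec_eq (hinj : CycInj wseq) {c : (Fin (m + 1) → Bool) → ℝ} :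
    ∑ t : ZMod p, c (wseq t) = ∑ w ∈ Finset.univ.image wseq, c w := by
  rw [Finset.sum_image (fun s _ s' _ h => hinj.wseq_inj h)]

/-- Key dichotomy: either `c` is the uniform cycle circulation, or it can be split off. -/
lemma dichotomy {c : (Fin (m + 1) → Bool) → ℝ} (hc : c ∈ Pol m)
    (hedge : CycEdges wseq) (hinj : CycInj wseq) (hpos : ∀ t, 0 < c (wseq t)) :
    c = cycVec wseq ∨
    ∃ ε : ℝ, 0 < ε ∧ ε < 1 ∧ ∃ c2 ∈ Pol m,
      (Finset.univ.filter (fun w => c2 w ≠ 0)).card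
        < (Finset.univ.filter (fun w => c w ≠ 0)).card ∧
      ∀ w, c w = ε * cycVec wseq w + (1 - ε) * c2 w := by
  have hppos : 0 < p := NeZero.pos p
  have hpR : (0 : ℝ) < (p : ℝ) := by exact_mod_cast hppos
  obtain ⟨hcpos, hcsum, hckir⟩ := hc
  obtain ⟨hupos, husum, hukir⟩ := cycVec_mem_Pol hedge hinj
  have hne : (Finset.univ : Finset (ZMod p)).Nonempty := Finset.univ_nonempty
  set mn := Finset.univ.inf' hne (fun t : ZMod p => c (wseq t)) with hmn
  obtain ⟨tstar, _, htstar⟩ := Finset.exists_mem_eq_inf' hne (fun t : ZMod p => c (wseq t))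
  have hmnpos : 0 < mn := by
    rw [hmn, htstar]; exact hpos tstar
  have hmnle : ∀ t, mn ≤ c (wseq t) := fun t => Finset.inf'_le _ (Finset.mem_univ t)
  set ε := (p : ℝ) * mn with hε
  have hεpos : 0 < ε := mul_pos hpR hmnpos
  -- value of cycVec on and off the cycle
  have hucyc : ∀ t, cycVec wseq (wseq t) = (p : ℝ)⁻¹ := fun t => if_pos ⟨t, rfl⟩
  have huoff : ∀ w, (∀ t, wseq t ≠ w) → cycVec wseq w = 0 := by
    intro w hw
    exact if_neg (fun ⟨t, ht⟩ => hw t ht)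
  -- sum over the image
  have harcs : ε ≤ ∑ w ∈ Finset.univ.image wseq, c w := by
    rw [← sum_cycVec_eq hinj]
    calc ε = ∑ _t : ZMod p, mn := by
          rw [Finset.sum_const, Finset.card_univ, ZMod.card, nsmul_eq_mul, hε]
      _ ≤ ∑ t : ZMod p, c (wseq t) := Finset.sum_le_sum fun t _ => hmnle t
  by_cases hεlt : ε < 1
  · -- split off the cycle
    right
    have h1ε : (0:ℝ) < 1 - ε := by linarith
    set c2 : (Fin (m + 1) → Bool) → ℝ := fun w => (1 - ε)⁻¹ * (c w - ε * cycVec wseq w)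
      with hc2
    have hεu : ∀ t, ε * cycVec wseq (wseq t) = mn := by
      intro t
      rw [hucyc t, hε]
      field_simp
    have hc2pos : ∀ w, 0 ≤ c2 w := by
      intro w
      apply mul_nonneg (by positivity)
      by_cases h : ∃ t, wseq t = w
      · obtain ⟨t, rfl⟩ := h
        rw [hεu t]
        linarith [hmnle t]
      · rw [huoff w (fun t ht => h ⟨t, ht⟩)]
        have := hcpos w
        linarith
    have hc2sum : ∑ w, c2 w = 1 := by
      simp only [hc2, mul_sub]
      rw [Finset.sum_sub_distrib, ← Finset.mul_sum, ← Finset.mul_sum, ← Finset.mul_sum,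
        hcsum, husum]
      field_simp
    have hc2kir : ∀ u : Fin m → Bool,
        (∑ b : Bool, c2 (Fin.cons b u)) = ∑ b : Bool, c2 (Fin.snoc u b) := by
      intro u
      simp only [hc2, mul_sub]
      rw [Finset.sum_sub_distrib, Finset.sum_sub_distrib, ← Finset.mul_sum, ← Finset.mul_sum,
        ← Finset.mul_sum, ← Finset.mul_sum, ← Finset.mul_sum, ← Finset.mul_sum,
        hckir u, hukir u]
    have hc2star : c2 (wseq tstar) = 0 := by
      simp only [hc2]
      rw [hεu tstar, ← htstar]
      ring
    have hsub : Finset.univ.filter (fun w => c2 w ≠ 0)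
        ⊆ (Finset.univ.filter (fun w => c w ≠ 0)).erase (wseq tstar) := by
      intro w hw
      rw [Finset.mem_filter] at hw
      rw [Finset.mem_erase, Finset.mem_filter]
      refine ⟨?_, Finset.mem_univ w, ?_⟩
      · intro hweq
        rw [hweq] at hw
        exact hw.2 hc2star
      · intro hcw0
        apply hw.2
        have huw0 : cycVec wseq w = 0 := by
          apply huoff
          intro t ht
          have := hpos t
          rw [ht, hcw0] at this
          linarith
        simp only [hc2, hcw0, huw0]
        ring
    have hmemstar : wseq tstar ∈ Finset.univ.filter (fun w => c w ≠ 0) :=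
      Finset.mem_filter.2 ⟨Finset.mem_univ _, (hpos tstar).ne'⟩
    have hcard : (Finset.univ.filter (fun w => c2 w ≠ 0)).card
        < (Finset.univ.filter (fun w => c w ≠ 0)).card := by
      calc (Finset.univ.filter (fun w => c2 w ≠ 0)).card
          ≤ ((Finset.univ.filter (fun w => c w ≠ 0)).erase (wseq tstar)).card :=
            Finset.card_le_card hsub
        _ < (Finset.univ.filter (fun w => c w ≠ 0)).card :=
            Finset.card_erase_lt_of_mem hmemstar
    refine ⟨ε, hεpos, hεlt, c2, ⟨hc2pos, hc2sum, hc2kir⟩, hcard, ?_⟩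
    intro w
    simp only [hc2]
    rw [← mul_assoc, mul_inv_cancel₀ h1ε.ne', one_mul]
    ring
  · -- c is supported on the cycle, hence uniform
    left
    push_neg at hεlt
    have hoffzero : ∀ w, (∀ t, wseq t ≠ w) → c w = 0 := by
      intro w hw
      have hsplit : ∑ w ∈ Finset.univ \ Finset.univ.image wseq, c w
          + ∑ w ∈ Finset.univ.image wseq, c w = 1 := by
        rw [Finset.sum_sdiff (Finset.subset_univ _), hcsum]
      have hnonneg : 0 ≤ ∑ w ∈ Finset.univ \ Finset.univ.image wseq, c w :=
        Finset.sum_nonneg fun w _ => hcpos w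
      have hzero : ∑ w ∈ Finset.univ \ Finset.univ.image wseq, c w = 0 := by
        nlinarith [harcs]
      have hwmem : w ∈ Finset.univ \ Finset.univ.image wseq := by
        rw [Finset.mem_sdiff]
        refine ⟨Finset.mem_univ w, ?_⟩
        intro hmem
        obtain ⟨t, _, ht⟩ := Finset.mem_image.1 hmem
        exact hw t ht
      exact (Finset.sum_eq_zero_iff_of_nonneg fun w _ => hcpos w).1 hzero w hwmem
    funext w
    by_cases h : ∃ t, wseq t = w
    · obtain ⟨t, rfl⟩ := h
      rw [rigid hedge hinj ⟨hcpos, hcsum, hckir⟩ hoffzero t, hucyc t]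
    · rw [hoffzero w (fun t ht => h ⟨t, ht⟩), huoff w (fun t ht => h ⟨t, ht⟩)]



end Cycle

lemma mix_invariant {μ ν : Measure Omega} (hμ : InvariantProb μ) (hν : InvariantProb ν)
    {ε : ℝ} (h0 : 0 ≤ ε) (h1 : ε ≤ 1) :
    InvariantProb (ENNReal.ofReal ε • μ + ENNReal.ofReal (1 - ε) • ν) := by
  obtain ⟨hμp, hμi⟩ := hμ; obtain ⟨hνp, hνi⟩ := hν
  haveI := hμp; haveI := hνp
  constructor
  · constructor
    rw [Measure.add_apply, Measure.smul_apply, Measure.smul_apply, measure_univ, measure_univ,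
      smul_eq_mul, smul_eq_mul, mul_one, mul_one, ← ENNReal.ofReal_add h0 (by linarith)]
    norm_num
  · intro s hs
    rw [Measure.add_apply, Measure.add_apply, Measure.smul_apply, Measure.smul_apply,
      Measure.smul_apply, Measure.smul_apply, hμi s hs, hνi s hs]

lemma mix_piProj {μ ν : Measure Omega} (hμ : IsProbabilityMeasure μ)
    (hν : IsProbabilityMeasure ν) {ε : ℝ} (h0 : 0 ≤ ε) (h1 : ε ≤ 1) (n : ℕ)
    (w : Fin n → Bool) :
    piProj n (ENNReal.ofReal ε • μ + ENNReal.ofReal (1 - ε) • ν) w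
      = ε * piProj n μ w + (1 - ε) * piProj n ν w := by
  haveI := hμ; haveI := hν
  rw [piProj, Measure.add_apply, Measure.smul_apply, Measure.smul_apply, smul_eq_mul,
    smul_eq_mul,
    ENNReal.toReal_add (ENNReal.mul_ne_top ENNReal.ofReal_ne_top (measure_ne_top μ _))
      (ENNReal.mul_ne_top ENNReal.ofReal_ne_top (measure_ne_top ν _)),
    ENNReal.toReal_mul, ENNReal.toReal_mul, ENNReal.toReal_ofReal h0,
    ENNReal.toReal_ofReal (by linarith : (0:ℝ) ≤ 1 - ε)]
  rfl

lemma Pol_subset_rotSet : Pol m ⊆ rotSet (m + 1) := by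
  suffices H : ∀ (N : ℕ) (c : (Fin (m + 1) → Bool) → ℝ), c ∈ Pol m →
      (Finset.univ.filter (fun w => c w ≠ 0)).card ≤ N → c ∈ rotSet (m + 1) by
    intro c hc
    exact H _ c hc le_rfl
  intro N
  induction N with
  | zero =>
    intro c hc hcard
    exfalso
    have hempty : Finset.univ.filter (fun w => c w ≠ 0) = ∅ :=
      Finset.card_eq_zero.1 (Nat.le_zero.1 hcard)
    have hall : ∀ w, c w = 0 := by
      intro w
      by_contra h
      have : w ∈ Finset.univ.filter (fun w => c w ≠ 0) :=
        Finset.mem_filter.2 ⟨Finset.mem_univ w, h⟩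
      rw [hempty] at this
      exact Finset.notMem_empty w this
    have hsum := hc.2.1
    rw [Finset.sum_congr rfl (fun w _ => hall w)] at hsum
    simp at hsum
  | succ N ih =>
    intro c hc hcard
    obtain ⟨p, hp, wseq, hcyc⟩ := exists_cycle hc
    haveI : NeZero p := ⟨hp.ne'⟩
    obtain ⟨hedge, hinj, hpos⟩ := hcyc inferInstance
    rcases dichotomy hc hedge hinj hpos with heq | ⟨ε, hε0, hε1, c2, hc2, hlt, hcomb⟩
    · rw [heq]
      exact cycVec_mem_rotSet hedge hinj
    · obtain ⟨ν, hν, hνeq⟩ := ih c2 hc2 (by omega)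
      have hμC := orbitMeasure_invariant (cycPoint wseq) hp (cycPoint_per hedge)
      refine ⟨ENNReal.ofReal ε • orbitMeasure (cycPoint wseq) p + ENNReal.ofReal (1 - ε) • ν,
        mix_invariant hμC hν hε0.le (by linarith), ?_⟩
      funext w
      rw [mix_piProj hμC.1 hν.1 hε0.le (by linarith) (m + 1) w, hcomb w,
        cycMeasure_piProj hedge hinj w, ← hνeq]
      rfl

lemma rotSet_eq_Pol : rotSet (m + 1) = Pol m :=
  Set.Subset.antisymm rotSet_subset_Pol Pol_subset_rotSet

lemma extreme_surj {c : (Fin (m + 1) → Bool) → ℝ}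
    (hc : c ∈ Set.extremePoints ℝ (rotSet (m + 1))) :
    ∃ μ, MemCn (m + 1) μ ∧ piProj (m + 1) μ = c := by
  rw [mem_extremePoints] at hc
  obtain ⟨hcrot, hext⟩ := hc
  have hcpol := rotSet_subset_Pol hcrot
  obtain ⟨p, hp, wseq, hcyc⟩ := exists_cycle hcpol
  haveI : NeZero p := ⟨hp.ne'⟩
  obtain ⟨hedge, hinj, hpos⟩ := hcyc inferInstance
  rcases dichotomy hcpol hedge hinj hpos with heq | ⟨ε, hε0, hε1, c2, hc2, hlt, hcomb⟩
  · refine ⟨orbitMeasure (cycPoint wseq) p, cycMeasure_memCn hedge hinj, ?_⟩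
    rw [← cycVec_eq_piProj hedge hinj, heq]
  · have hu_rot := cycVec_mem_rotSet hedge hinj (m := m)
    have hc2rot := Pol_subset_rotSet hc2
    have hseg : c ∈ openSegment ℝ (cycVec wseq) c2 := by
      refine ⟨ε, 1 - ε, hε0, by linarith, by ring, ?_⟩
      funext w
      simp only [Pi.add_apply, Pi.smul_apply, smul_eq_mul]
      exact (hcomb w).symm
    obtain ⟨h1, h2⟩ := hext _ hu_rot _ hc2rot hseg
    refine ⟨orbitMeasure (cycPoint wseq) p, cycMeasure_memCn hedge hinj, ?_⟩
    rw [← cycVec_eq_piProj hedge hinj, h1]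


end FMain



/-- Support characterization via the projection. -/
lemma memCn_supp_char {μ : Measure Omega} (hμ : MemCn (m + 1) μ) :
    msupp μ = {y | ∀ k, 0 < piProj (m + 1) μ (winN m k y)} := by
  obtain ⟨x, q, hq, hqper, hμeq, hdist⟩ := canon hμ.1
  have hsupp_eq : msupp μ = orbSet x q := by rw [hμeq, msupp_orbitMeasure x hq]
  ext y
  constructor
  · intro hy k
    rw [hsupp_eq] at hy
    obtain ⟨j, hj, rfl⟩ := hy
    rw [hμeq, piProj_orbit_pos_iff x hq]
    refine ⟨(k + j) % q, Nat.mod_lt _ hq, ?_⟩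
    rw [← iterate_mod hq hqper (k + j), Function.iterate_add_apply]
    exact iter_mem_winN (shift^[j] x) k
  · intro hy
    simp only [Set.mem_setOf_eq] at hy
    have hex : ∀ k, ∃ j < q, shift^[j] x ∈ cylF (winN m k y) := by
      intro k
      have := hy k
      rw [hμeq, piProj_orbit_pos_iff x hq] at this
      exact this
    set z : ℕ → Omega := fun k => shift^[(hex k).choose] x with hz
    have hzlt : ∀ k, (hex k).choose < q := fun k => (hex k).choose_spec.1
    have hzcyl : ∀ k (i : Fin (m + 1)), z k (i : ℕ) = y ((i : ℕ) + k) := by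
      intro k i
      exact (hex k).choose_spec.2 i
    have hzmem : ∀ k, z k ∈ msupp μ := by
      intro k
      rw [hsupp_eq]
      exact ⟨(hex k).choose, hzlt k, rfl⟩
    have hstep : ∀ k, shift (z k) = z (k + 1) := by
      intro k
      apply hμ.2
      · -- shift (z k) ∈ msupp μ
        rw [hsupp_eq]
        refine ⟨((hex k).choose + 1) % q, Nat.mod_lt _ hq, ?_⟩
        rw [← iterate_mod hq hqper, Function.iterate_succ_apply']
      · exact hzmem (k + 1)
      · intro l hl
        have hL : shift (z k) l = y ((l + 1) + k) := by
          show z k (l + 1) = y ((l + 1) + k)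
          exact hzcyl k ⟨l + 1, by omega⟩
        have hR : z (k + 1) l = y (l + (k + 1)) := hzcyl (k + 1) ⟨l, by omega⟩
        rw [hL, hR]
        congr 1
        ring
    have hziter : ∀ k, z k = shift^[k] (z 0) := by
      intro k
      induction k with
      | zero => rfl
      | succ k ih =>
        rw [← hstep k, ih]
        exact (Function.iterate_succ_apply' shift k (z 0)).symm
    have hy0 : y = z 0 := by
      funext k
      have h1 : z k 0 = y (0 + k) := hzcyl k 0
      have h2 : z k 0 = z 0 (0 + k) := by
        rw [hziter k, shift_iterate_apply]
      rw [Nat.zero_add] at h1 h2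
      rw [← h1, h2]
    rw [hy0]
    exact hzmem 0

/-- Injectivity of the projection on `C_n`. -/
lemma memCn_inj {μ1 μ2 : Measure Omega} (h1 : MemCn (m + 1) μ1) (h2 : MemCn (m + 1) μ2)
    (heq : piProj (m + 1) μ1 = piProj (m + 1) μ2) : μ1 = μ2 := by
  obtain ⟨x1, q1, hq1, hper1, hμeq1, hdist1⟩ := canon h1.1
  obtain ⟨x2, q2, hq2, hper2, hμeq2, hdist2⟩ := canon h2.1
  set S1 : Finset Omega := (Finset.range q1).image (fun j => shift^[j] x1) with hS1
  set S2 : Finset Omega := (Finset.range q2).image (fun j => shift^[j] x2) with hS2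
  have hS1coe : (S1 : Set Omega) = msupp μ1 := by
    rw [hμeq1, msupp_orbitMeasure x1 hq1]
    ext y
    simp only [hS1, Finset.coe_image, Finset.coe_range, Set.mem_image, Set.mem_Iio]
    constructor
    · rintro ⟨j, hj, rfl⟩; exact ⟨j, hj, rfl⟩
    · rintro ⟨j, hj, rfl⟩; exact ⟨j, hj, rfl⟩
  have hS2coe : (S2 : Set Omega) = msupp μ2 := by
    rw [hμeq2, msupp_orbitMeasure x2 hq2]
    ext y
    simp only [hS2, Finset.coe_image, Finset.coe_range, Set.mem_image, Set.mem_Iio]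
    constructor
    · rintro ⟨j, hj, rfl⟩; exact ⟨j, hj, rfl⟩
    · rintro ⟨j, hj, rfl⟩; exact ⟨j, hj, rfl⟩
  have hsupp_eq : msupp μ1 = msupp μ2 := by
    rw [memCn_supp_char h1, memCn_supp_char h2, heq]
  have hS12 : S1 = S2 := Finset.coe_injective (by rw [hS1coe, hS2coe, hsupp_eq])
  have hinj1 : Set.InjOn (fun j => shift^[j] x1) ↑(Finset.range q1) := by
    intro i hi j hj h
    simp only [Finset.coe_range, Set.mem_Iio] at hi hj
    exact hdist1 i j hi hj h
  have hinj2 : Set.InjOn (fun j => shift^[j] x2) ↑(Finset.range q2) := by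
    intro i hi j hj h
    simp only [Finset.coe_range, Set.mem_Iio] at hi hj
    exact hdist2 i j hi hj h
  have hq1card : S1.card = q1 := by
    rw [hS1, Finset.card_image_of_injOn hinj1, Finset.card_range]
  have hq2card : S2.card = q2 := by
    rw [hS2, Finset.card_image_of_injOn hinj2, Finset.card_range]
  have hqq : q1 = q2 := by rw [← hq1card, hS12, hq2card]
  apply Measure.ext_iff.mpr
  intro s hs
  have hcount1 : ((Finset.range q1).filter (fun j => shift^[j] x1 ∈ s)).card
      = (S1.filter (fun y => y ∈ s)).card := by
    rw [hS1, Finset.filter_image, Finset.card_image_of_injOn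
      (hinj1.mono (Finset.coe_subset.2 (Finset.filter_subset _ _)))]
  have hcount2 : ((Finset.range q2).filter (fun j => shift^[j] x2 ∈ s)).card
      = (S2.filter (fun y => y ∈ s)).card := by
    rw [hS2, Finset.filter_image, Finset.card_image_of_injOn
      (hinj2.mono (Finset.coe_subset.2 (Finset.filter_subset _ _)))]
  rw [hμeq1, hμeq2, orbitMeasure_apply x1 q1 hs, orbitMeasure_apply x2 q2 hs,
    hcount1, hcount2, hS12, hqq]


end RotAux

/-- **The rotation set is the circulation polytope of the de Bruijn graph.**  For every
`n = m + 1 ≥ 1`, the rotation set `R_n = π_n(M_σ)` equals — identifying coordinates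
indexed by words of length `n` with arcs of the de Bruijn graph `G_n` (whose nodes are
the words of length `n − 1`, the arc `ω` going from its initial subword to its final
subword) — the circulation polytope of `G_n`: the set of nonnegative weight vectors of
total mass `1` satisfying Kirchhoff's current law at every node.  Moreover `R_n` has the
injectivity property: `π_n` restricted to `𝒞_n` is a bijection onto the set of vertices
(extreme points) of `R_n`. -/
theorem rotation_set_eq_deBruijn_circulations (m : ℕ) :
    rotSet (m + 1) =
      {c : (Fin (m + 1) → Bool) → ℝ | (∀ w, 0 ≤ c w) ∧ (∑ w, c w = 1) ∧
        ∀ u : Fin m → Bool, (∑ b : Bool, c (Fin.cons b u)) = ∑ b : Bool, c (Fin.snoc u b)} ∧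
    Set.BijOn (piProj (m + 1)) {μ : MeasureTheory.Measure Omega | MemCn (m + 1) μ}
      (Set.extremePoints ℝ (rotSet (m + 1))) := by
  constructor
  · exact RotAux.rotSet_eq_Pol
  · refine ⟨fun μ hμ => RotAux.memCn_extreme hμ,
      fun μ1 h1 μ2 h2 heq => RotAux.memCn_inj h1 h2 heq, fun c hc => ?_⟩
    obtain ⟨μ, hμ, hproj⟩ := RotAux.extreme_surj hc
    exact ⟨μ, hμ, hproj⟩
end

section
/- Let n ≤ k be positive integers, let μ ∈ C_n and ξ ∈ C_k with per(μ) ≤ per(ξ), and let g be a step function of level k. Then ∫g dξ − ∫g dμ ≤ 2(k−n+1)‖g‖_∞ · ξ(Ω \ B_{μ,n}). -/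
open Filter Set MeasureTheory
open scoped ENNReal
open scoped Classical

lemma shift_iter (z : Omega) (a c : ℕ) : shift^[a] z c = z (c + a) := by
  induction a generalizing z with
  | zero => rfl
  | succ a ih =>
    rw [Function.iterate_succ_apply, ih (shift z)]
    rfl

lemma cyl_open (z : Omega) (m : ℕ) : IsOpen {w : Omega | ∀ c < m, w c = z c} := by
  have h : {w : Omega | ∀ c < m, w c = z c} = ⋂ c ∈ Finset.range m, (fun w : Omega => w c) ⁻¹' {z c} := by
    ext w; simp
  rw [h]
  exact isOpen_biInter_finset fun c _ => (continuous_apply c).isOpen_preimage _ (isOpen_discrete _)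

lemma cyl_meas (z : Omega) (m : ℕ) : MeasurableSet {w : Omega | ∀ c < m, w c = z c} :=
  (cyl_open z m).measurableSet

lemma shift_iter_fixed (z : Omega) (m s : ℕ) (hz : shift^[m] z = z) : shift^[m * s] z = z := by
  rw [Function.iterate_mul]
  exact Function.iterate_fixed hz s

lemma shift_iter_mod (z : Omega) (m : ℕ) (hz : shift^[m] z = z) (a : ℕ) :
    shift^[a] z = shift^[a % m] z := by
  conv_lhs => rw [← Nat.mod_add_div a m]
  rw [Function.iterate_add_apply, shift_iter_fixed z m (a / m) hz]

lemma orbitMeasure_apply (z : Omega) (m : ℕ) (s : Set Omega) (hs : MeasurableSet s) :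
    orbitMeasure z m s =
      (m : ℝ≥0∞)⁻¹ * ((Finset.range m).filter (fun j => shift^[j] z ∈ s)).card := by
  classical
  rw [orbitMeasure, Measure.smul_apply, smul_eq_mul]
  congr 1
  rw [Measure.finset_sum_apply, Finset.card_filter]
  push_cast
  rw [Finset.sum_congr rfl (fun j _ => Measure.dirac_apply' _ hs)]
  simp [Set.indicator_apply]

lemma msupp_orbit (z : Omega) (m : ℕ) (hm : 0 < m) :
    msupp (orbitMeasure z m) = {w | ∃ i < m, w = shift^[i] z} := by
  classical
  ext w
  constructor
  · intro hw
    by_contra hno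
    simp only [Set.mem_setOf_eq] at hno
    push_neg at hno
    have hex : ∀ i, i < m → ∃ c, w c ≠ shift^[i] z c := by
      intro i him
      by_contra hc; push_neg at hc
      exact hno i him (funext fun c => hc c) |>.elim
    set D : ℕ → ℕ := fun i => if h : ∃ c, w c ≠ shift^[i] z c then Nat.find h else 0 with hD
    set m' := ((Finset.range m).sup D) + 1 with hm'
    have hU := hw {v | ∀ c < m', v c = w c} (cyl_open w m') (fun c _ => rfl)
    rw [orbitMeasure_apply _ _ _ (cyl_meas w m')] at hU
    rw [ENNReal.mul_pos_iff] at hU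
    have h2 := hU.2
    rw [Nat.cast_pos, Finset.card_pos] at h2
    obtain ⟨j, hj⟩ := h2
    simp only [Finset.mem_filter, Finset.mem_range] at hj
    obtain ⟨hjm, hjmem⟩ := hj
    have h1 : ∃ c, w c ≠ shift^[j] z c := hex j hjm
    have h2 : D j = Nat.find h1 := by rw [hD]; simp [dif_pos h1]
    have h3 : w (D j) ≠ shift^[j] z (D j) := by rw [h2]; exact Nat.find_spec h1
    have h4 : D j < m' := Nat.lt_succ_of_le (Finset.le_sup (Finset.mem_range.2 hjm))
    exact h3 (hjmem (D j) h4).symm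
  · simp only [Set.mem_setOf_eq]
    rintro ⟨i, him, rfl⟩
    intro U hUo hxU
    rw [orbitMeasure_apply _ _ _ hUo.measurableSet]
    have hcard : ((Finset.range m).filter (fun j => shift^[j] z ∈ U)).card ≠ 0 := by
      refine Finset.card_pos.2 ⟨i, Finset.mem_filter.2 ⟨Finset.mem_range.2 him, hxU⟩⟩ |>.ne'
    exact ENNReal.mul_pos (ENNReal.inv_ne_zero.2 (ENNReal.natCast_ne_top m))
      (Nat.cast_ne_zero.2 hcard)

lemma integrable_of_sm (g : Omega → ℝ) (hsm : StronglyMeasurable g)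
    (z : Omega) : Integrable g (Measure.dirac z) := by
  refine ⟨hsm.aestronglyMeasurable, ?_⟩
  have : HasFiniteIntegral g (Measure.dirac z) := by
    show (∫⁻ a, (‖g a‖₊ : ℝ≥0∞) ∂Measure.dirac z) < ⊤
    rw [lintegral_dirac' _ (by measurability)]
    exact ENNReal.coe_lt_top
  exact this

lemma integral_orbitMeasure (z : Omega) (m : ℕ) (g : Omega → ℝ) (hsm : StronglyMeasurable g) :
    ∫ w, g w ∂(orbitMeasure z m) = (m : ℝ)⁻¹ * ∑ j ∈ Finset.range m, g (shift^[j] z) := by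
  rw [orbitMeasure, integral_smul_measure,
    integral_finset_sum_measure (fun j _ => integrable_of_sm g hsm _)]
  simp only [integral_dirac' _ _ hsm]
  rw [smul_eq_mul]
  congr 1
  simp [ENNReal.toReal_inv]

lemma dirac_sum_mul (z : Omega) (e : ℕ) (hz : shift^[e] z = z) (s : ℕ) :
    ∑ j ∈ Finset.range (e * s), Measure.dirac (shift^[j] z)
      = s • ∑ j ∈ Finset.range e, Measure.dirac (shift^[j] z) := by
  induction s with
  | zero => simp
  | succ s ih =>
    rw [Nat.mul_succ, Finset.sum_range_add, ih, succ_nsmul]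
    congr 1
    refine Finset.sum_congr rfl fun j hj => ?_
    congr 1
    rw [Nat.add_comm, Function.iterate_add_apply, shift_iter_fixed z e s hz]

lemma orbitMeasure_of_dvd (z : Omega) (e q : ℕ) (he : 0 < e) (hq : 0 < q) (hdvd : e ∣ q)
    (hz : shift^[e] z = z) : orbitMeasure z q = orbitMeasure z e := by
  obtain ⟨s, rfl⟩ := hdvd
  have hs : s ≠ 0 := by rintro rfl; simp at hq
  rw [orbitMeasure, orbitMeasure, dirac_sum_mul z e hz s, ← Nat.cast_smul_eq_nsmul ℝ≥0∞,
    smul_smul]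
  congr 1
  push_cast
  rw [ENNReal.mul_inv (Or.inl (by exact_mod_cast he.ne')) (Or.inl (ENNReal.natCast_ne_top e)),
    mul_assoc, ENNReal.inv_mul_cancel (by exact_mod_cast hs) (ENNReal.natCast_ne_top s), mul_one]

lemma shift_iter_comm (a b : ℕ) (w : Omega) :
    shift^[a] (shift^[b] w) = shift^[b] (shift^[a] w) := by
  rw [← Function.iterate_add_apply, ← Function.iterate_add_apply, Nat.add_comm]

lemma orbit_index_inj (z : Omega) (q : ℕ) (hz : shift^[q] z = z)
    (hmin : ∀ e, 0 < e → e ∣ q → shift^[e] z = z → q ≤ e) :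
    ∀ j, j < q → ∀ j', j' < q → shift^[j] z = shift^[j'] z → j = j' := by
  suffices H : ∀ j j', j ≤ j' → j' < q → shift^[j] z = shift^[j'] z → j = j' by
    intro j hj j' hj' heq
    rcases le_total j j' with h | h
    · exact H j j' h hj' heq
    · exact (H j' j h hj heq.symm).symm
  intro j j' hle hj' heq
  by_contra hne
  set d := j' - j with hd
  have hd0 : 0 < d := by omega
  have hdq : d < q := by omega
  have h1 : shift^[d] (shift^[j] z) = shift^[j] z := by
    rw [← Function.iterate_add_apply, show d + j = j' from by omega]
    exact heq.symm
  have h2 : shift^[q - j] (shift^[j] z) = z := by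
    rw [← Function.iterate_add_apply, show (q - j) + j = q from by omega]
    exact hz
  have hper : shift^[d] z = z := by
    calc shift^[d] z = shift^[d] (shift^[q - j] (shift^[j] z)) := by rw [h2]
      _ = shift^[q - j] (shift^[d] (shift^[j] z)) := shift_iter_comm _ _ _
      _ = shift^[q - j] (shift^[j] z) := by rw [h1]
      _ = z := h2
  have hPne : ∃ m, 0 < m ∧ shift^[m] z = z := ⟨d, hd0, hper⟩
  have he := Nat.find_spec hPne
  set e := Nat.find hPne with hedef
  have hee : e ≤ d := Nat.find_min' hPne ⟨hd0, hper⟩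
  have he0 : 0 < e := he.1
  have hr : shift^[q % e] z = z := by
    rw [← shift_iter_mod z e he.2 q]
    exact hz
  have hdvd : e ∣ q := by
    rcases Nat.eq_zero_or_pos (q % e) with h0 | hpos
    · exact Nat.dvd_of_mod_eq_zero h0
    · have h5 := Nat.find_min' hPne ⟨hpos, hr⟩
      have h6 := Nat.mod_lt q he0
      omega
  have := hmin e he0 hdvd he.2
  omega

def extWord (k : ℕ) (v : Fin k → Bool) : Omega := fun c => if h : c < k then v ⟨c, h⟩ else false

lemma g_factor (k : ℕ) (g : Omega → ℝ) (hg : ∀ x y : Omega, (∀ i, i < k → x i = y i) → g x = g y)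
    (w : Omega) : g w = g (extWord k (fun i => w i)) := by
  apply hg
  intro i hi
  simp [extWord, dif_pos hi]

lemma g_measurable (k : ℕ) (g : Omega → ℝ)
    (hg : ∀ x y : Omega, (∀ i, i < k → x i = y i) → g x = g y) : Measurable g := by
  have hfac : g = (fun v : Fin k → Bool => g (extWord k v)) ∘ (fun w (i : Fin k) => w i) :=
    funext fun w => g_factor k g hg w
  rw [hfac]
  exact (measurable_of_countable _).comp (measurable_pi_lambda _ fun i => measurable_pi_apply _)

lemma g_bddAbove (k : ℕ) (g : Omega → ℝ)
    (hg : ∀ x y : Omega, (∀ i, i < k → x i = y i) → g x = g y) :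
    BddAbove (Set.range fun w => |g w|) := by
  have hsub : (Set.range fun w => |g w|) ⊆ (fun v : Fin k → Bool => |g (extWord k v)|) '' Set.univ := by
    rintro r ⟨w, rfl⟩
    refine ⟨fun i => w i, Set.mem_univ _, ?_⟩
    simp only []
    rw [← g_factor k g hg w]
  exact (Set.Finite.image _ Set.finite_univ).bddAbove.mono hsub

lemma g_le_iSup (k : ℕ) (g : Omega → ℝ)
    (hg : ∀ x y : Omega, (∀ i, i < k → x i = y i) → g x = g y) (z : Omega) :
    |g z| ≤ ⨆ w, |g w| := le_ciSup (g_bddAbove k g hg) z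

lemma core (n k p q : ℕ) (hn : 0 < n) (hnk : n ≤ k) (hp : 0 < p) (hq : 0 < q) (hpq : p ≤ q)
    (x y : Omega) (hx : shift^[p] x = x) (hy : shift^[q] y = y)
    (g : Omega → ℝ) (M : ℝ) (hM : ∀ z, |g z| ≤ M)
    (hg : ∀ z w : Omega, (∀ i, i < k → z i = w i) → g z = g w)
    (B : Set Omega) (hB : ∀ w, w ∈ B ↔ ∃ i, i < p ∧ ∀ c, c < n → w c = shift^[i] x c)
    (hCn : ∀ i, i < p → ∀ i', i' < p →
        (∀ m, m + 1 < n → shift^[i] x m = shift^[i'] x m) → shift^[i] x = shift^[i'] x)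
    (hCk : ∀ j, j < q → ∀ j', j' < q →
        (∀ m, m + 1 < k → shift^[j] y m = shift^[j'] y m) → j = j') :
    (q : ℝ)⁻¹ * ∑ j ∈ Finset.range q, g (shift^[j] y)
      - (p : ℝ)⁻¹ * ∑ i ∈ Finset.range p, g (shift^[i] x)
    ≤ 2 * ((k - n + 1 : ℕ) : ℝ) * M *
        ((((Finset.range q).filter (fun j => shift^[j] y ∉ B)).card : ℝ) / q) := by
  classical
  have hmody : ∀ a, shift^[a] y = shift^[a % q] y := shift_iter_mod y q hy
  have hmodx : ∀ a, shift^[a] x = shift^[a % p] x := shift_iter_mod x p hx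
  set Out := (Finset.range q).filter (fun j => shift^[j] y ∉ B) with hOut
  set GoodP : ℕ → Prop := fun j => ∀ t, t ≤ k - n → shift^[j + t] y ∈ B with hGoodP
  set Good := (Finset.range q).filter GoodP with hGood
  set Bad := (Finset.range q).filter (fun j => ¬ GoodP j) with hBad
  set I : ℕ → ℕ := fun j =>
    if h : ∃ i, i < p ∧ ∀ c, c < n → shift^[j] y c = shift^[i] x c then h.choose else 0 with hIdef
  have hI : ∀ j, shift^[j] y ∈ B →
      I j < p ∧ ∀ c, c < n → shift^[j] y c = shift^[I j] x c := by
    intro j hjB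
    have h : ∃ i, i < p ∧ ∀ c, c < n → shift^[j] y c = shift^[i] x c := by
      obtain ⟨i, hip, hic⟩ := (hB (shift^[j] y)).1 hjB
      exact ⟨i, hip, hic⟩
    have : I j = h.choose := by rw [hIdef]; simp [dif_pos h]
    rw [this]
    exact h.choose_spec
  have hchain : ∀ j, GoodP j → ∀ t, t ≤ k - n → ∀ c, c < n →
      shift^[j + t] y c = shift^[I j + t] x c := by
    intro j hGj t
    induction t with
    | zero =>
      intro _ c hc
      simpa using (hI j (by simpa using hGj 0 (Nat.zero_le _))).2 c hc
    | succ t ih =>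
      intro ht1 c hc
      have ht : t ≤ k - n := by omega
      have hBt1 : shift^[j + (t+1)] y ∈ B := hGj (t+1) ht1
      obtain ⟨hi'p, hi'⟩ := hI (j + (t+1)) hBt1
      have hpt : ∀ m, m + 1 < n →
          shift^[I (j + (t+1))] x m = shift^[(I j + (t+1)) % p] x m := by
        intro m hm
        have e1 : shift^[I (j + (t+1))] x m = shift^[j + (t+1)] y m :=
          (hi' m (by omega)).symm
        have e2 : shift^[j + (t+1)] y m = shift^[j + t] y (m + 1) := by
          rw [shift_iter, shift_iter]
          congr 1
          omega
        have e3 : shift^[j + t] y (m + 1) = shift^[I j + t] x (m + 1) :=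
          ih ht (m + 1) hm
        have e4 : shift^[I j + t] x (m + 1) = shift^[I j + (t+1)] x m := by
          rw [shift_iter, shift_iter]
          congr 1
          omega
        rw [e1, e2, e3, e4, hmodx]
      have hpeq : shift^[I (j + (t+1))] x = shift^[(I j + (t+1)) % p] x :=
        hCn _ hi'p _ (Nat.mod_lt _ hp) hpt
      have : shift^[j + (t+1)] y c = shift^[I (j + (t+1))] x c := hi' c hc
      rw [this, hpeq, ← hmodx]
  have hfull : ∀ j, GoodP j → ∀ c, c < k → shift^[j] y c = shift^[I j] x c := by
    intro j hGj c hck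
    rcases Nat.lt_or_ge c n with hcn | hcn
    · simpa using hchain j hGj 0 (Nat.zero_le _) c hcn
    · have h1 : shift^[j] y c = shift^[j + (c - n + 1)] y (n - 1) := by
        rw [shift_iter, shift_iter]
        congr 1
        omega
      have h2 : shift^[j + (c - n + 1)] y (n - 1) = shift^[I j + (c - n + 1)] x (n - 1) :=
        hchain j hGj (c - n + 1) (by omega) (n - 1) (by omega)
      have h3 : shift^[I j + (c - n + 1)] x (n - 1) = shift^[I j] x c := by
        rw [shift_iter, shift_iter]
        congr 1
        omega
      rw [h1, h2, h3]
  have hgood_g : ∀ j, GoodP j → g (shift^[j] y) = g (shift^[I j] x) :=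
    fun j hGj => hg _ _ (fun c hck => hfull j hGj c hck)
  have hinj : ∀ j ∈ Good, ∀ j' ∈ Good, I j = I j' → j = j' := by
    intro j hj j' hj' hII
    rw [hGood, Finset.mem_filter, Finset.mem_range] at hj hj'
    refine hCk j hj.1 j' hj'.1 (fun m hm => ?_)
    rw [hfull j hj.2 m (by omega), hfull j' hj'.2 m (by omega), hII]
  have hbadcard : Bad.card ≤ (k - n + 1) * Out.card := by
    have hmapsto : ∀ j ∈ Bad, ∃ t, t ≤ k - n ∧ shift^[j + t] y ∉ B := by
      intro j hj
      rw [hBad, Finset.mem_filter] at hj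
      have h2 : ¬ ∀ t, t ≤ k - n → shift^[j + t] y ∈ B := by simpa [hGoodP] using hj.2
      push_neg at h2
      obtain ⟨t, ht, htB⟩ := h2
      exact ⟨t, ht, htB⟩
    set F : ℕ → ℕ × ℕ := fun j =>
      if h : ∃ t, t ≤ k - n ∧ shift^[j + t] y ∉ B
      then (Nat.find h, (j + Nat.find h) % q) else (0, 0) with hF
    have hFspec : ∀ j, ∀ hj : j ∈ Bad, F j ∈ (Finset.range (k - n + 1)) ×ˢ Out ∧
        F j = (Nat.find (hmapsto j hj), (j + Nat.find (hmapsto j hj)) % q) := by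
      intro j hj
      have h := hmapsto j hj
      have hFj : F j = (Nat.find h, (j + Nat.find h) % q) := by
        rw [hF]; simp [dif_pos h]
      obtain ⟨ht, htB⟩ := Nat.find_spec h
      refine ⟨?_, hFj⟩
      rw [hFj, Finset.mem_product]
      constructor
      · simp only [Finset.mem_range]
        omega
      · rw [hOut, Finset.mem_filter, Finset.mem_range]
        refine ⟨Nat.mod_lt _ hq, ?_⟩
        rw [← hmody]
        exact htB
    calc Bad.card ≤ ((Finset.range (k - n + 1)) ×ˢ Out).card := by
          apply Finset.card_le_card_of_injOn F (fun j hj => (hFspec j hj).1)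
          intro j hj j' hj' hFF
          have e1 := (hFspec j hj).2
          have e2 := (hFspec j' hj').2
          rw [e1, e2] at hFF
          have ht : Nat.find (hmapsto j hj) = Nat.find (hmapsto j' hj') :=
            congrArg Prod.fst hFF
          have hr : (j + Nat.find (hmapsto j hj)) % q
              = (j' + Nat.find (hmapsto j' hj')) % q := congrArg Prod.snd hFF
          rw [← ht] at hr
          have hjq : j < q := Finset.mem_range.1 (Finset.mem_of_mem_filter j hj)
          have hj'q : j' < q := Finset.mem_range.1 (Finset.mem_of_mem_filter j' hj')
          set t := Nat.find (hmapsto j hj)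
          have hme : j + t ≡ j' + t [MOD q] := hr
          have := (Nat.ModEq.add_right_cancel' t hme)
          rw [Nat.ModEq, Nat.mod_eq_of_lt hjq, Nat.mod_eq_of_lt hj'q] at this
          exact this
      _ = (k - n + 1) * Out.card := by
          rw [Finset.card_product, Finset.card_range]
  -- sums
  set S := Good.image I with hS
  have hScard : S.card = Good.card := Finset.card_image_of_injOn hinj
  have hSsub : S ⊆ Finset.range p := by
    intro i hi
    rw [hS] at hi
    obtain ⟨j, hj, rfl⟩ := Finset.mem_image.1 hi
    rw [hGood, Finset.mem_filter] at hj
    have hjB : shift^[j] y ∈ B := by simpa using hj.2 0 (Nat.zero_le _)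
    exact Finset.mem_range.2 (hI j hjB).1
  have hSp : S.card ≤ p := by simpa using Finset.card_le_card hSsub
  have hsum1 : ∑ j ∈ Finset.range q, g (shift^[j] y)
      ≤ (∑ i ∈ Finset.range p, g (shift^[i] x)) + ((p : ℝ) - S.card) * M + Bad.card * M := by
    have hsplit : ∑ j ∈ Finset.range q, g (shift^[j] y)
        = ∑ j ∈ Good, g (shift^[j] y) + ∑ j ∈ Bad, g (shift^[j] y) := by
      rw [hGood, hBad]
      exact (Finset.sum_filter_add_sum_filter_not _ _ _).symm
    have h1 : ∑ j ∈ Good, g (shift^[j] y) = ∑ i ∈ S, g (shift^[i] x) := by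
      rw [hS, Finset.sum_image hinj]
      exact Finset.sum_congr rfl fun j hj => hgood_g j (Finset.mem_filter.1 hj).2
    have h2 : ∑ j ∈ Bad, g (shift^[j] y) ≤ (Bad.card : ℝ) * M := by
      have := Finset.sum_le_card_nsmul Bad (fun j => g (shift^[j] y)) M
        (fun j _ => (abs_le.1 (hM _)).2)
      simpa [nsmul_eq_mul] using this
    have h4 : ∑ i ∈ Finset.range p \ S, g (shift^[i] x) + ∑ i ∈ S, g (shift^[i] x)
        = ∑ i ∈ Finset.range p, g (shift^[i] x) := Finset.sum_sdiff hSsub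
    have h3 : -(((p : ℝ) - S.card) * M) ≤ ∑ i ∈ Finset.range p \ S, g (shift^[i] x) := by
      have hc : (Finset.range p \ S).card = p - S.card := by
        rw [Finset.card_sdiff_of_subset hSsub, Finset.card_range]
      have h5 := Finset.card_nsmul_le_sum (Finset.range p \ S) (fun i => g (shift^[i] x)) (-M)
        (fun i _ => (abs_le.1 (hM _)).1)
      rw [hc] at h5
      have h6 : ((p - S.card : ℕ) : ℝ) = (p : ℝ) - S.card := by
        push_cast [Nat.cast_sub hSp]
        ring
      rw [nsmul_eq_mul, h6] at h5
      linarith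
    linarith
  have hCbound : -((p : ℝ) * M) ≤ ∑ i ∈ Finset.range p, g (shift^[i] x) := by
    have h5 := Finset.card_nsmul_le_sum (Finset.range p) (fun i => g (shift^[i] x)) (-M)
      (fun i _ => (abs_le.1 (hM _)).1)
    simpa [nsmul_eq_mul] using h5
  have hcards : Good.card + Bad.card = q := by
    rw [hGood, hBad, Finset.card_filter_add_card_filter_not, Finset.card_range]
  have hM0 : 0 ≤ M := le_trans (abs_nonneg _) (hM y)
  -- final arithmetic
  set A := ∑ j ∈ Finset.range q, g (shift^[j] y) with hA
  set C := ∑ i ∈ Finset.range p, g (shift^[i] x) with hC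
  set κ := ((k - n + 1 : ℕ) : ℝ) with hκ
  have hppos : (0:ℝ) < p := by exact_mod_cast hp
  have hqpos : (0:ℝ) < q := by exact_mod_cast hq
  have hpqR : (p:ℝ) ≤ q := by exact_mod_cast hpq
  have hbN : (Bad.card : ℝ) ≤ κ * Out.card := by
    rw [hκ]
    exact_mod_cast hbadcard
  have hcardsR : (Good.card : ℝ) + Bad.card = q := by exact_mod_cast hcards
  have hScardR : (S.card : ℝ) = Good.card := by exact_mod_cast hScard
  have e1 : (p:ℝ) * A ≤ p * (C + ((p : ℝ) - S.card) * M + Bad.card * M) :=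
    mul_le_mul_of_nonneg_left hsum1 (le_of_lt hppos)
  have e2 : ((p:ℝ) - q) * C ≤ ((q:ℝ) - p) * (p * M) := by nlinarith [hCbound]
  have key : (p:ℝ) * A - q * C ≤ p * (2 * κ * M * Out.card) := by
    have e3 : (p:ℝ) * M * Bad.card ≤ p * M * (κ * Out.card) :=
      mul_le_mul_of_nonneg_left hbN (by positivity)
    have e4 : (S.card : ℝ) = q - Bad.card := by linarith
    calc (p:ℝ) * A - q * C ≤ p * (C + ((p : ℝ) - S.card) * M + Bad.card * M) - q * C := by
          linarith
      _ = (p - q) * C + p * M * (((p:ℝ) - S.card) + Bad.card) := by ring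
      _ ≤ (q - p) * (p * M) + p * M * (((p:ℝ) - S.card) + Bad.card) := by linarith
      _ = p * M * ((q : ℝ) - S.card + Bad.card) := by ring
      _ = p * M * (2 * Bad.card) := by rw [e4]; ring
      _ ≤ p * M * (2 * (κ * Out.card)) := by linarith
      _ = p * (2 * κ * M * Out.card) := by ring
  have lhs_eq : (q:ℝ)⁻¹ * A - (p:ℝ)⁻¹ * C = ((p:ℝ) * A - q * C) / (p * q) := by
    field_simp
  have rhs_eq : 2 * κ * M * ((Out.card : ℝ) / q) = (p * (2 * κ * M * Out.card)) / (p * q) := by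
    rw [mul_div_mul_left _ _ hppos.ne']
    ring
  rw [lhs_eq, rhs_eq]
  exact div_le_div_of_nonneg_right key (by positivity) |>.trans_eq rfl

/-- **Cancellation lemma.**  Let `1 ≤ n ≤ k`, let `μ ∈ 𝒞_n` and `ξ ∈ 𝒞_k` with
`per(μ) ≤ per(ξ)`, and let `g` be a step function of level `k`.  Then
`∫ g dξ − ∫ g dμ ≤ 2 (k−n+1) ‖g‖_∞ ξ(Ω \ B_{μ,n})`. -/
theorem step_function_cancellation (n k : ℕ) (hn : 0 < n) (hnk : n ≤ k)
    (μ ξ : MeasureTheory.Measure Omega) (hμ : MemCn n μ) (hξ : MemCn k ξ)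
    (hper : perM μ ≤ perM ξ) (g : Omega → ℝ)
    (hg : ∀ x y : Omega, (∀ i, i < k → x i = y i) → g x = g y) :
    (∫ x, g x ∂ξ) - ∫ x, g x ∂μ ≤
      2 * ((k - n + 1 : ℕ) : ℝ) * (⨆ x, |g x|) * (ξ (Bbasin μ n)ᶜ).toReal := by
  classical
  obtain ⟨hμper, hμsep⟩ := hμ
  obtain ⟨hξper, hξsep⟩ := hξ
  have hμne : {m | 0 < m ∧ ∃ z, shift^[m] z = z ∧ μ = orbitMeasure z m}.Nonempty := by
    obtain ⟨z, m, hm, hz, hmeq⟩ := hμper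
    exact ⟨m, hm, z, hz, hmeq⟩
  have hξne : {m | 0 < m ∧ ∃ z, shift^[m] z = z ∧ ξ = orbitMeasure z m}.Nonempty := by
    obtain ⟨z, m, hm, hz, hmeq⟩ := hξper
    exact ⟨m, hm, z, hz, hmeq⟩
  set p := perM μ with hpdef
  set q := perM ξ with hqdef
  have hμmem : 0 < p ∧ ∃ z, shift^[p] z = z ∧ μ = orbitMeasure z p := Nat.sInf_mem hμne
  have hξmem : 0 < q ∧ ∃ z, shift^[q] z = z ∧ ξ = orbitMeasure z q := Nat.sInf_mem hξne
  obtain ⟨hp0, x, hx, hμeq⟩ := hμmem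
  obtain ⟨hq0, y, hy, hξeq⟩ := hξmem
  have hqmin : ∀ e, 0 < e → e ∣ q → shift^[e] y = y → q ≤ e := by
    intro e he0 hdvd hye
    have heq2 : ξ = orbitMeasure y e := by
      rw [hξeq, orbitMeasure_of_dvd y e q he0 hq0 hdvd hye]
    exact Nat.sInf_le ⟨he0, y, hye, heq2⟩
  have hyinj := orbit_index_inj y q hy hqmin
  have hmsx : msupp μ = {w | ∃ i, i < p ∧ w = shift^[i] x} := by
    rw [hμeq]
    exact msupp_orbit x p hp0
  have hmsy : msupp ξ = {w | ∃ j, j < q ∧ w = shift^[j] y} := by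
    rw [hξeq]
    exact msupp_orbit y q hq0
  have hB : ∀ w, w ∈ Bbasin μ n ↔ ∃ i, i < p ∧ ∀ c, c < n → w c = shift^[i] x c := by
    intro w
    constructor
    · rintro ⟨v, hv, hvc⟩
      rw [hmsx] at hv
      obtain ⟨i, hip, rfl⟩ := hv
      exact ⟨i, hip, fun c hc => hvc c hc⟩
    · rintro ⟨i, hip, hic⟩
      refine ⟨shift^[i] x, ?_, fun c hc => hic c hc⟩
      rw [hmsx]
      exact ⟨i, hip, rfl⟩
  have hCn' : ∀ i, i < p → ∀ i', i' < p →
      (∀ m, m + 1 < n → shift^[i] x m = shift^[i'] x m) → shift^[i] x = shift^[i'] x := by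
    intro i hi i' hi' hagree
    refine hμsep _ ?_ _ ?_ hagree
    · rw [hmsx]; exact ⟨i, hi, rfl⟩
    · rw [hmsx]; exact ⟨i', hi', rfl⟩
  have hCk' : ∀ j, j < q → ∀ j', j' < q →
      (∀ m, m + 1 < k → shift^[j] y m = shift^[j'] y m) → j = j' := by
    intro j hj j' hj' hagree
    refine hyinj j hj j' hj' (hξsep _ ?_ _ ?_ hagree)
    · rw [hmsy]; exact ⟨j, hj, rfl⟩
    · rw [hmsy]; exact ⟨j', hj', rfl⟩
  have hBmeas : MeasurableSet (Bbasin μ n) := by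
    have hBeq : Bbasin μ n = ⋃ i ∈ Finset.range p, {w : Omega | ∀ c < n, w c = shift^[i] x c} := by
      ext w
      rw [Set.mem_iUnion₂]
      constructor
      · intro hw
        obtain ⟨i, hip, hic⟩ := (hB w).1 hw
        exact ⟨i, Finset.mem_range.2 hip, hic⟩
      · rintro ⟨i, hip, hic⟩
        exact (hB w).2 ⟨i, Finset.mem_range.1 hip, hic⟩
    rw [hBeq]
    exact Finset.measurableSet_biUnion _ (fun i _ => cyl_meas (shift^[i] x) n)
  have hsm : StronglyMeasurable g := (g_measurable k g hg).stronglyMeasurable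
  have hNq : (ξ (Bbasin μ n)ᶜ).toReal
      = (((Finset.range q).filter (fun j => shift^[j] y ∉ Bbasin μ n)).card : ℝ) / q := by
    rw [hξeq, orbitMeasure_apply y q _ hBmeas.compl]
    simp only [Set.mem_compl_iff]
    rw [ENNReal.toReal_mul, ENNReal.toReal_inv]
    simp [div_eq_inv_mul]
  have hMle := g_le_iSup k g hg
  have hint1 : ∫ w, g w ∂ξ = (q : ℝ)⁻¹ * ∑ j ∈ Finset.range q, g (shift^[j] y) := by
    rw [hξeq, integral_orbitMeasure y q g hsm]
  have hint2 : ∫ w, g w ∂μ = (p : ℝ)⁻¹ * ∑ i ∈ Finset.range p, g (shift^[i] x) := by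
    rw [hμeq, integral_orbitMeasure x p g hsm]
  rw [hint1, hint2, hNq]
  exact core n k p q hn hnk hp0 hq0 hper x y hx hy g _ hMle hg (Bbasin μ n) hB hCn' hCk'
end
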